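/- arXiv:2407.01387 — 3 statements merged into one kernel-verified Lean document; each statement's English description precedes it below -/
import Mathlib

section
/- Fix r ≥ 1 and let a = σ₁^{γ₁}⋯σ_n^{γ_n} be an r-coloured permutation of length n. For m ≥ 1, define the polynomial ψ_m(a) ∈ ℚ[p₀,…,p_{r−1},x] as the sum of p^{col(a)} x^{i₁+i₂+⋯+i_n−n} over all sequences 1 ≤ i₁ ≤ i₂ ≤ ⋯ ≤ i_n ≤ m such that i_j < i_{j+1} whenever j ∈ Des(a) ∩ [n−1], and i₁ ≥ 2 whenever 0 ∈ Des(a). Then in ℚ[p₀,…,p_{r−1},x]⟦t⟧ one has Σ_{m=1}^∞ ψ_m(a) t^{m−1} = p^{col(a)} x^{comaj(a)} t^{des(a)} / ((1−t)(1−xt)⋯(1−xⁿt)). -/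
open scoped Classical

noncomputable section

/-- A coloured permutation: a list of (symbol, colour) pairs. -/
abbrev CPerm : Type := List (ℕ × ℕ)

/-- `a` is a genuine coloured permutation: distinct, positive symbols. -/
def IsCPerm (a : CPerm) : Prop :=
  (a.map Prod.fst).Nodup ∧ ∀ p ∈ a, 0 < p.1

/-- The colour order on coloured integers: `p < q` iff the colour of `p` is bigger
(as an integer), or the colours agree and the symbol of `p` is smaller. -/
def cLt (p q : ℕ × ℕ) : Prop :=
  q.2 < p.2 ∨ (p.2 = q.2 ∧ p.1 < q.1)

instance : DecidableRel cLt := fun p q => by unfold cLt; infer_instance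

/-- The descent set of a coloured permutation (positions `0,…,n−1`; position `i ≥ 1`
is a descent iff the `(i+1)`-st entry is smaller than the `i`-th entry (1-indexed)
in the colour order; `0` is a descent iff the first colour is nonzero). -/
def DesSet (a : CPerm) : Finset ℕ :=
  (Finset.range a.length).filter fun i =>
    if i = 0 then (a.getD 0 (0, 0)).2 ≠ 0
    else cLt (a.getD i (0, 0)) (a.getD (i - 1) (0, 0))

/-- Descent number. -/
def des (a : CPerm) : ℕ := (DesSet a).card

/-- Comajor index. -/
def comaj (a : CPerm) : ℕ := ∑ i ∈ DesSet a, (a.length - i)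

/-- `colVec a j` is the number of entries of `a` of colour `j`. -/
def colVec (a : CPerm) (j : ℕ) : ℕ := (a.map Prod.snd).count j

/-- The multiset of shuffles of two lists. -/
def shuffles {α : Type*} : List α → List α → Multiset (List α)
  | [], bs => {bs}
  | a :: as, [] => {a :: as}
  | a :: as, b :: bs =>
      ((shuffles as (b :: bs)).map (a :: ·)) + ((shuffles (a :: as) bs).map (b :: ·))
  termination_by as bs => as.length + bs.length

/-- The set of symbols of a coloured permutation. -/
def symbols (a : CPerm) : Finset ℕ := (a.map Prod.fst).toFinset

/-- The set of nonzero colours of a coloured permutation. -/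
def paletteStar (a : CPerm) : Finset ℕ := ((a.map Prod.snd).toFinset).erase 0

/-- Two coloured permutations are symbol-disjoint if they share no symbols. -/
def SymbolDisjoint (a b : CPerm) : Prop := Disjoint (symbols a) (symbols b)

/-- `a` is `r`-coloured: all colours lie in `{0,…,r−1}`. -/
def RColoured (r : ℕ) (a : CPerm) : Prop := ∀ p ∈ a, p.2 < r

/-- Symbols of a coloured configuration (= multiset of coloured permutations). -/
def msymbols (f : Multiset CPerm) : Finset ℕ := (f.map symbols).sup

/-- `palette*` of a coloured configuration. -/
def mpalette (f : Multiset CPerm) : Finset ℕ := (f.map paletteStar).sup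

/-- The shuffle of two coloured configurations (bi-additive extension). -/
def mshuffle (f g : Multiset CPerm) : Multiset CPerm :=
  f.bind fun a => g.bind fun b => shuffles a b

/-- Hadamard product of formal power series. -/
def hadamard {R : Type*} [Semiring R] (A B : PowerSeries R) : PowerSeries R :=
  PowerSeries.mk fun k => (PowerSeries.coeff (R := R) k) A * (PowerSeries.coeff (R := R) k) B

/-- The geometric series `1/(1 − c·Y) = Σ_k c^k Y^k`. -/
def geom {R : Type*} [Semiring R] (c : R) : PowerSeries R :=
  PowerSeries.mk fun k => c ^ k

/-- The field ℚ(X) of rational functions. -/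
abbrev K : Type := RatFunc ℚ

/-- The variable X of ℚ(X). -/
def XX : K := RatFunc.X

/-- Membership in `U = {±X^k : k ∈ ℤ}`. -/
def InU (u : K) : Prop := ∃ k : ℤ, u = XX ^ k ∨ u = -XX ^ k

/-- `α(a) = Π_i α(γ_i)`. -/
def alphaProd (α : ℕ → K) (a : CPerm) : K := (a.map fun p => α p.2).prod

/-- The summand of `W^ε_{f,α}` corresponding to a single coloured permutation. -/
def Wterm (ε : ℤ) (α : ℕ → K) (a : CPerm) : PowerSeries K :=
  PowerSeries.C (R := K) (alphaProd α a * XX ^ (ε * (comaj a : ℤ))) * PowerSeries.X ^ des a *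
    ∏ i ∈ Finset.range (a.length + 1), geom (XX ^ (ε * (i : ℤ)))

/-- `W^ε_{f,α} = Σ_a f_a α(a) X^{ε·comaj(a)} Y^{des(a)} / ((1−Y)⋯(1−X^{ε|a|}Y))`. -/
def W (ε : ℤ) (α : ℕ → K) (f : Multiset CPerm) : PowerSeries K :=
  (f.map (Wterm ε α)).sum

/-- `(f,α)` is a labelled coloured configuration. -/
def IsLCC (f : Multiset CPerm) (α : ℕ → K) : Prop :=
  (∀ a ∈ f, IsCPerm a) ∧ (∀ c, InU (α c)) ∧ (∀ c ∉ mpalette f, α c = 1)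


/-- The polynomial ring `ℚ[p₀,p₁,…][x]`; `x` is `Polynomial.X` and `p_j` is
`MvPolynomial.X j`. -/
abbrev PXRing : Type := Polynomial (MvPolynomial ℕ ℚ)

/-- The monomial `p^{col(a)} = p₀^{col₀(a)} ⋯`. -/
def pMon (a : CPerm) : MvPolynomial ℕ ℚ := (a.map fun p => MvPolynomial.X p.2).prod

/-- `Φ(a) = p^{col(a)} x^{comaj(a)} t^{des(a)} / ((1−t)(1−xt)⋯(1−xⁿt))`. -/
def Phi (a : CPerm) : PowerSeries PXRing :=
  PowerSeries.C (R := PXRing) (Polynomial.C (pMon a) * Polynomial.X ^ comaj a) *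
    PowerSeries.X ^ des a *
    ∏ i ∈ Finset.range (a.length + 1), geom ((Polynomial.X : PXRing) ^ i)

/-- `ψ_m(a)`: the sum of `p^{col(a)} x^{i₁+⋯+i_n−n}` over all weakly increasing
sequences `1 ≤ i₁ ≤ ⋯ ≤ i_n ≤ m` (encoded as `v : Fin n → Fin (m+1)`,
`i_{j+1} = v j`) which increase strictly at descents in `Des(a) ∩ [n−1]` and
start at `i₁ ≥ 2` whenever `0 ∈ Des(a)`. -/
def psi (a : CPerm) (m : ℕ) : PXRing :=
  ∑ v ∈ Finset.univ.filter (fun v : Fin a.length → Fin (m + 1) =>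
      (∀ j, 1 ≤ (v j : ℕ)) ∧
      (∀ j k, j ≤ k → (v j : ℕ) ≤ (v k : ℕ)) ∧
      (∀ j k : Fin a.length, (k : ℕ) = (j : ℕ) + 1 → (j : ℕ) + 1 ∈ DesSet a →
        (v j : ℕ) < (v k : ℕ)) ∧
      (0 ∈ DesSet a → ∀ j : Fin a.length, (j : ℕ) = 0 → 2 ≤ (v j : ℕ))),
    Polynomial.C (pMon a) * Polynomial.X ^ ((∑ j, (v j : ℕ)) - a.length)


namespace SumPsiAux

lemma geom_inv {R : Type*} [CommRing R] (c : R) :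
    (1 - PowerSeries.C (R := R) c * PowerSeries.X) * geom c = 1 := by
  have h : (1 - PowerSeries.C (R := R) c * PowerSeries.X) * geom c
      = geom c - PowerSeries.C (R := R) c * (geom c * PowerSeries.X) := by ring
  rw [h]
  ext k
  cases k with
  | zero => simp [geom]
  | succ k =>
    simp [geom, PowerSeries.coeff_succ_mul_X, pow_succ, mul_comm]

/-- Monotone sequences `0 ≤ c₀ ≤ ⋯ ≤ c_{n-1} ≤ k`. -/
def Sset (n k : ℕ) : Finset (Fin n → ℕ) :=
  (Fintype.piFinset fun _ => Finset.range (k+1)).filter Monotone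

lemma mem_Sset {n k : ℕ} {c : Fin n → ℕ} :
    c ∈ Sset n k ↔ (∀ j, c j ≤ k) ∧ Monotone c := by
  simp [Sset, Fintype.mem_piFinset, Nat.lt_succ_iff]

def Spoly (n k : ℕ) : PXRing := ∑ c ∈ Sset n k, (Polynomial.X : PXRing) ^ (∑ j, c j)

lemma Sset_zero (n : ℕ) : Sset n 0 = {fun _ => 0} := by
  ext c
  simp only [mem_Sset, Finset.mem_singleton]
  constructor
  · rintro ⟨h, -⟩; funext j; exact Nat.le_zero.mp (h j)
  · rintro rfl; exact ⟨fun j => le_rfl, monotone_const⟩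

lemma Spoly_zero (n : ℕ) : Spoly n 0 = 1 := by
  simp [Spoly, Sset_zero]

lemma Sset_nil (k : ℕ) : Sset 0 k = {fun j => j.elim0} := by
  ext c
  simp only [mem_Sset, Finset.mem_singleton]
  constructor
  · intro _; funext j; exact j.elim0
  · rintro rfl; exact ⟨fun j => j.elim0, fun x => x.elim0⟩

lemma Spoly_nil (k : ℕ) : Spoly 0 k = 1 := by
  simp [Spoly, Sset_nil]

lemma Spoly_succ (n k : ℕ) :
    Spoly (n+1) (k+1) = Spoly n (k+1) + (Polynomial.X : PXRing) ^ (n+1) * Spoly (n+1) k := by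
  rw [Spoly, ← Finset.sum_filter_add_sum_filter_not (Sset (n+1) (k+1)) (fun c => c 0 = 0)]
  congr 1
  · rw [Spoly]
    refine Finset.sum_nbij' (fun c => c ∘ Fin.succ) (fun c => Fin.cons 0 c) ?_ ?_ ?_ ?_ ?_
    · intro c hc
      rw [Finset.mem_filter, mem_Sset] at hc
      exact mem_Sset.mpr ⟨fun j => hc.1.1 _, hc.1.2.comp Fin.strictMono_succ.monotone⟩
    · intro c hc
      rw [mem_Sset] at hc
      rw [Finset.mem_filter, mem_Sset]
      refine ⟨⟨fun j => ?_, ?_⟩, by simp⟩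
      · refine Fin.cases ?_ ?_ j
        · simp
        · intro i; simpa using hc.1 i
      · intro x y hxy
        rcases Fin.eq_zero_or_eq_succ x with rfl | ⟨i, rfl⟩
        · simp
        · rcases Fin.eq_zero_or_eq_succ y with rfl | ⟨j, rfl⟩
          · exact absurd (le_antisymm hxy (Fin.zero_le _)) (Fin.succ_ne_zero i)
          · simpa [Fin.cons_succ] using hc.2 (Fin.succ_le_succ_iff.mp hxy)
    · intro c hc
      rw [Finset.mem_filter] at hc
      funext j
      refine Fin.cases ?_ ?_ j
      · simpa using hc.2.symm
      · intro i; simp [Fin.cons_succ]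
    · intro c _
      funext j
      simp [Fin.cons_succ]
    · intro c hc
      rw [Finset.mem_filter] at hc
      rw [Fin.sum_univ_succ, hc.2]
      simp [Function.comp]
  · rw [Spoly, Finset.mul_sum]
    have hsummand : ∀ c ∈ Sset (n+1) k,
        (Polynomial.X : PXRing) ^ (n+1) * Polynomial.X ^ (∑ j, c j)
          = Polynomial.X ^ ((n+1) + ∑ j, c j) := by
      intro c _; rw [← pow_add]
    rw [Finset.sum_congr rfl hsummand]
    refine Finset.sum_nbij' (fun c j => c j - 1) (fun c j => c j + 1) ?_ ?_ ?_ ?_ ?_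
    · intro c hc
      rw [Finset.mem_filter, mem_Sset] at hc
      refine mem_Sset.mpr ⟨fun j => ?_, fun x y h => Nat.sub_le_sub_right (hc.1.2 h) 1⟩
      have := hc.1.1 j; omega
    · intro c hc
      rw [mem_Sset] at hc
      rw [Finset.mem_filter, mem_Sset]
      exact ⟨⟨fun j => by have := hc.1 j; omega,
        fun x y h => Nat.add_le_add_right (hc.2 h) 1⟩, Nat.succ_ne_zero _⟩
    · intro c hc
      rw [Finset.mem_filter, mem_Sset] at hc
      have hpos : ∀ j, 1 ≤ c j := fun j =>
        le_trans (Nat.one_le_iff_ne_zero.mpr hc.2) (hc.1.2 (Fin.zero_le j))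
      funext j
      show c j - 1 + 1 = c j
      have := hpos j; omega
    · intro c _
      funext j
      show c j + 1 - 1 = c j
      omega
    · intro c hc
      rw [Finset.mem_filter, mem_Sset] at hc
      have hpos : ∀ j, 1 ≤ c j := fun j =>
        le_trans (Nat.one_le_iff_ne_zero.mpr hc.2) (hc.1.2 (Fin.zero_le j))
      congr 1
      have h1 : ∀ j ∈ (Finset.univ : Finset (Fin (n+1))), c j = (c j - 1) + 1 := by
        intro j _; have := hpos j; omega
      rw [Finset.sum_congr rfl h1, Finset.sum_add_distrib]
      simp [add_comm]

lemma mk_Spoly (n : ℕ) :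
    (PowerSeries.mk fun k => Spoly n k) =
      ∏ i ∈ Finset.range (n+1), geom ((Polynomial.X : PXRing) ^ i) := by
  induction n with
  | zero =>
    rw [Finset.prod_range_one]
    ext k
    simp [geom, Spoly_nil]
  | succ n ih =>
    rw [Finset.prod_range_succ, ← ih]
    set c : PXRing := (Polynomial.X : PXRing) ^ (n+1) with hc
    have h1 : (PowerSeries.mk fun k => Spoly (n+1) k) *
        (1 - PowerSeries.C (R := PXRing) c * PowerSeries.X) = PowerSeries.mk fun k => Spoly n k := by
      have hexp : (PowerSeries.mk fun k => Spoly (n+1) k) *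
          (1 - PowerSeries.C (R := PXRing) c * PowerSeries.X)
          = (PowerSeries.mk fun k => Spoly (n+1) k)
            - PowerSeries.C (R := PXRing) c * ((PowerSeries.mk fun k => Spoly (n+1) k)
              * PowerSeries.X) := by ring
      rw [hexp]
      ext k : 1
      cases k with
      | zero => simp [Spoly_zero]
      | succ k =>
        rw [map_sub, PowerSeries.coeff_C_mul, PowerSeries.coeff_succ_mul_X,
          PowerSeries.coeff_mk, PowerSeries.coeff_mk, PowerSeries.coeff_mk,
          Spoly_succ]
        ring
    calc (PowerSeries.mk fun k => Spoly (n+1) k)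
        = (PowerSeries.mk fun k => Spoly (n+1) k) *
            ((1 - PowerSeries.C (R := PXRing) c * PowerSeries.X) * geom c) := by
          rw [geom_inv, mul_one]
      _ = ((PowerSeries.mk fun k => Spoly (n+1) k) *
            (1 - PowerSeries.C (R := PXRing) c * PowerSeries.X)) * geom c := by ring
      _ = (PowerSeries.mk fun k => Spoly n k) * geom c := by rw [h1]

def Dcnt (a : CPerm) (j : ℕ) : ℕ := ((DesSet a).filter (fun x => x ≤ j)).card

lemma mem_DesSet_lt {a : CPerm} {x : ℕ} (hx : x ∈ DesSet a) : x < a.length := by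
  rw [DesSet, Finset.mem_filter, Finset.mem_range] at hx
  exact hx.1

lemma Dcnt_mono (a : CPerm) {j j' : ℕ} (h : j ≤ j') : Dcnt a j ≤ Dcnt a j' :=
  Finset.card_le_card (Finset.monotone_filter_right _ (fun x _ hx => le_trans hx h))

lemma Dcnt_card_eq (a : CPerm) (j : ℕ) :
    Dcnt a j = ∑ x ∈ DesSet a, (if x ≤ j then 1 else 0) := by
  rw [Dcnt, Finset.card_filter]

lemma Dcnt_zero (a : CPerm) : Dcnt a 0 = if 0 ∈ DesSet a then 1 else 0 := by
  rw [Dcnt_card_eq]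
  have h : ∀ x ∈ DesSet a, (if x ≤ 0 then 1 else 0) = (if x = 0 then 1 else 0) := by
    intro x _
    by_cases h : x = 0 <;> simp [h, Nat.le_zero]
  rw [Finset.sum_congr rfl h, Finset.sum_ite_eq' (DesSet a) 0 (fun _ => 1)]

lemma Dcnt_succ (a : CPerm) (j : ℕ) :
    Dcnt a (j+1) = Dcnt a j + (if j+1 ∈ DesSet a then 1 else 0) := by
  rw [Dcnt_card_eq, Dcnt_card_eq]
  have h : ∀ x ∈ DesSet a, (if x ≤ j+1 then (1:ℕ) else 0)
      = (if x ≤ j then 1 else 0) + (if x = j+1 then 1 else 0) := by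
    intro x _
    by_cases h1 : x ≤ j <;> by_cases h2 : x = j+1 <;> simp [h1, h2] <;> omega
  rw [Finset.sum_congr rfl h, Finset.sum_add_distrib,
    Finset.sum_ite_eq' (DesSet a) (j+1) (fun _ => 1)]

lemma Dcnt_full (a : CPerm) {j : ℕ} (h : a.length ≤ j + 1) : Dcnt a j = des a := by
  rw [Dcnt, des, Finset.filter_true_of_mem]
  intro x hx
  have := mem_DesSet_lt hx
  omega

lemma Dcnt_le_des (a : CPerm) (j : ℕ) : Dcnt a j ≤ des a :=
  Finset.card_le_card (Finset.filter_subset _ _)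

lemma sum_indicator_range {x n : ℕ} (h : x < n) :
    ∑ j ∈ Finset.range n, (if x ≤ j then 1 else 0) = n - x := by
  induction n with
  | zero => omega
  | succ n ih =>
    rw [Finset.sum_range_succ]
    rcases Nat.lt_or_ge x n with h' | h'
    · rw [ih h', if_pos (by omega)]; omega
    · have hx : x = n := by omega
      subst hx
      rw [if_pos le_rfl, Finset.sum_eq_zero (fun j hj => by
        rw [Finset.mem_range] at hj; rw [if_neg (by omega)])]
      omega

lemma sum_Dcnt (a : CPerm) : ∑ j ∈ Finset.range a.length, Dcnt a j = comaj a := by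
  have h : ∀ j ∈ Finset.range a.length, Dcnt a j
      = ∑ x ∈ DesSet a, (if x ≤ j then 1 else 0) := fun j _ => Dcnt_card_eq a j
  rw [Finset.sum_congr rfl h, Finset.sum_comm, comaj]
  exact Finset.sum_congr rfl (fun x hx => sum_indicator_range (mem_DesSet_lt hx))

section VFacts

variable (a : CPerm) {m : ℕ} (v : Fin a.length → Fin (m+1))
  (h1 : ∀ j, 1 ≤ (v j : ℕ))
  (h2 : ∀ j k, j ≤ k → (v j : ℕ) ≤ (v k : ℕ))
  (h3 : ∀ j k : Fin a.length, (k : ℕ) = (j : ℕ) + 1 → (j : ℕ) + 1 ∈ DesSet a →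
    (v j : ℕ) < (v k : ℕ))
  (h4 : 0 ∈ DesSet a → ∀ j : Fin a.length, (j : ℕ) = 0 → 2 ≤ (v j : ℕ))

include h1 h2 h3 h4 in
lemma v_lower : ∀ i : ℕ, ∀ hi : i < a.length, 1 + Dcnt a i ≤ (v ⟨i, hi⟩ : ℕ) := by
  intro i
  induction i with
  | zero =>
    intro hi
    rw [Dcnt_zero]
    split_ifs with h
    · exact h4 h ⟨0, hi⟩ rfl
    · simpa using h1 ⟨0, hi⟩
  | succ i ih =>
    intro hi
    have hi' : i < a.length := by omega
    have hord : (v ⟨i, hi'⟩ : ℕ) ≤ (v ⟨i+1, hi⟩ : ℕ) :=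
      h2 _ _ (Fin.mk_le_mk.mpr (Nat.le_succ i))
    have hprev := ih hi'
    rw [Dcnt_succ]
    split_ifs with h
    · have := h3 ⟨i, hi'⟩ ⟨i+1, hi⟩ rfl h
      omega
    · omega

include h2 h3 in
lemma v_step : ∀ i' i : ℕ, ∀ (hi : i < a.length) (hi' : i' < a.length), i ≤ i' →
    (v ⟨i, hi⟩ : ℕ) + Dcnt a i' ≤ (v ⟨i', hi'⟩ : ℕ) + Dcnt a i := by
  intro i'
  induction i' with
  | zero =>
    intro i hi hi' hle
    have : i = 0 := by omega
    subst this
    rfl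
  | succ i' ih =>
    intro i hi hi' hle
    have hii : i' < a.length := by omega
    have hord : (v ⟨i', hii⟩ : ℕ) ≤ (v ⟨i'+1, hi'⟩ : ℕ) :=
      h2 _ _ (Fin.mk_le_mk.mpr (Nat.le_succ i'))
    rcases Nat.lt_or_ge i (i'+1) with hlt | hge
    · have hih := ih i hi hii (by omega)
      rw [Dcnt_succ]
      split_ifs with h
      · have := h3 ⟨i', hii⟩ ⟨i'+1, hi'⟩ rfl h
        omega
      · omega
    · have : i = i' + 1 := by omega
      subst this
      rfl

end VFacts

lemma psi_eq (a : CPerm) (k : ℕ) :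
    psi a (k+1) = Polynomial.C (pMon a) * Polynomial.X ^ comaj a *
      (if des a ≤ k then Spoly a.length (k - des a) else 0) := by
  classical
  by_cases hk : des a ≤ k
  · rw [if_pos hk, psi, Spoly, Finset.mul_sum]
    have hrw : ∀ c ∈ Sset a.length (k - des a),
        Polynomial.C (pMon a) * Polynomial.X ^ comaj a * (Polynomial.X : PXRing) ^ (∑ j, c j)
        = Polynomial.C (pMon a) * Polynomial.X ^ (comaj a + ∑ j, c j) := by
      intro c _; rw [mul_assoc, ← pow_add]
    rw [Finset.sum_congr rfl hrw]
    refine Finset.sum_nbij' (fun v j => (v j : ℕ) - 1 - Dcnt a (j : ℕ))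
      (fun c j => (⟨min (c j + 1 + Dcnt a (j : ℕ)) (k+1),
        Nat.lt_succ_of_le (min_le_right _ _)⟩ : Fin (k+1+1))) ?_ ?_ ?_ ?_ ?_
    · intro v hv
      rw [Finset.mem_filter] at hv
      obtain ⟨-, hc1, hc2, hc3, hc4⟩ := hv
      have hlow := v_lower a v hc1 hc2 hc3 hc4
      have hstep := v_step a v hc2 hc3
      rw [mem_Sset]
      constructor
      · intro j
        have hn : 0 < a.length := j.pos
        have hstep' := hstep (a.length - 1) (j : ℕ) j.isLt (by omega) (by omega)
        rw [Dcnt_full a (by omega)] at hstep'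
        have hle := Fin.is_le (v ⟨a.length - 1, by omega⟩)
        have hlj := hlow (j : ℕ) j.isLt
        have hjv : v ⟨(j : ℕ), j.isLt⟩ = v j := rfl
        rw [hjv] at hstep' hlj
        omega
      · intro x y hxy
        dsimp only
        have hstep' := hstep (y : ℕ) (x : ℕ) x.isLt y.isLt (Fin.le_def.mp hxy)
        have hlx := hlow (x : ℕ) x.isLt
        have hxv : v ⟨(x : ℕ), x.isLt⟩ = v x := rfl
        have hyv : v ⟨(y : ℕ), y.isLt⟩ = v y := rfl
        rw [hxv, hyv] at hstep'
        rw [hxv] at hlx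
        omega
    · intro c hc
      rw [mem_Sset] at hc
      have hval : ∀ j : Fin a.length, min (c j + 1 + Dcnt a (j : ℕ)) (k+1)
          = c j + 1 + Dcnt a (j : ℕ) := by
        intro j
        have h1 := hc.1 j
        have h2 := Dcnt_le_des a (j : ℕ)
        omega
      rw [Finset.mem_filter]
      refine ⟨Finset.mem_univ _, ?_, ?_, ?_, ?_⟩
      · intro j
        show 1 ≤ min (c j + 1 + Dcnt a (j : ℕ)) (k+1)
        have := hval j
        omega
      · intro j j' hjj'
        show min (c j + 1 + Dcnt a (j : ℕ)) (k+1) ≤ min (c j' + 1 + Dcnt a (j' : ℕ)) (k+1)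
        have h1 := hc.2 hjj'
        have h2 := Dcnt_mono a (Fin.le_def.mp hjj')
        omega
      · intro j j' hj' hdes
        show min (c j + 1 + Dcnt a (j : ℕ)) (k+1) < min (c j' + 1 + Dcnt a (j' : ℕ)) (k+1)
        have h1 := hc.2 (show j ≤ j' from Fin.le_def.mpr (by omega))
        have hD := Dcnt_succ a (j : ℕ)
        rw [if_pos hdes] at hD
        have h2 : Dcnt a (j' : ℕ) = Dcnt a ((j : ℕ) + 1) := by rw [hj']
        have h3 := hval j
        have h4 := hval j'
        omega
      · intro h0 j hj0
        show 2 ≤ min (c j + 1 + Dcnt a (j : ℕ)) (k+1)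
        have hD : Dcnt a (j : ℕ) = 1 := by rw [hj0, Dcnt_zero, if_pos h0]
        have := hval j
        omega
    · intro v hv
      rw [Finset.mem_filter] at hv
      obtain ⟨-, hc1, hc2, hc3, hc4⟩ := hv
      have hlow := v_lower a v hc1 hc2 hc3 hc4
      funext j
      apply Fin.ext
      show min (((v j : ℕ) - 1 - Dcnt a (j : ℕ)) + 1 + Dcnt a (j : ℕ)) (k+1) = (v j : ℕ)
      have h1 := hlow (j : ℕ) j.isLt
      have h2 : v ⟨(j : ℕ), j.isLt⟩ = v j := rfl
      rw [h2] at h1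
      have h3 := Fin.is_le (v j)
      omega
    · intro c hc
      rw [mem_Sset] at hc
      funext j
      show min (c j + 1 + Dcnt a (j : ℕ)) (k+1) - 1 - Dcnt a (j : ℕ) = c j
      have h1 := hc.1 j
      have h2 := Dcnt_le_des a (j : ℕ)
      omega
    · intro v hv
      rw [Finset.mem_filter] at hv
      obtain ⟨-, hc1, hc2, hc3, hc4⟩ := hv
      have hlow := v_lower a v hc1 hc2 hc3 hc4
      dsimp only
      congr 1
      have hterm : ∀ j ∈ (Finset.univ : Finset (Fin a.length)),
          (v j : ℕ) = ((v j : ℕ) - 1 - Dcnt a (j : ℕ)) + 1 + Dcnt a (j : ℕ) := by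
        intro j _
        have h1 := hlow (j : ℕ) j.isLt
        have h2 : v ⟨(j : ℕ), j.isLt⟩ = v j := rfl
        rw [h2] at h1
        omega
      have hsum : ∑ j : Fin a.length, (v j : ℕ)
          = (∑ j : Fin a.length, ((v j : ℕ) - 1 - Dcnt a (j : ℕ))) + a.length
            + ∑ j : Fin a.length, Dcnt a (j : ℕ) := by
        rw [Finset.sum_congr rfl hterm, Finset.sum_add_distrib, Finset.sum_add_distrib]
        simp [Finset.card_univ]
      have hD : ∑ j : Fin a.length, Dcnt a (j : ℕ) = comaj a := by
        rw [Fin.sum_univ_eq_sum_range (fun i => Dcnt a i) a.length]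
        exact sum_Dcnt a
      rw [hsum, hD]
      congr 1
      omega
  · rw [if_neg hk, mul_zero, psi, Finset.sum_filter]
    apply Finset.sum_eq_zero
    intro v _
    rw [if_neg]
    rintro ⟨hc1, hc2, hc3, hc4⟩
    have hn : 0 < a.length := by
      by_contra h
      have hlen : a.length = 0 := by omega
      have : DesSet a = ∅ := by
        rw [DesSet, hlen]
        simp
      rw [des, this] at hk
      simp at hk
    have hlow := v_lower a v hc1 hc2 hc3 hc4 (a.length - 1) (by omega)
    have hle := Fin.is_le (v ⟨a.length - 1, by omega⟩)
    rw [Dcnt_full a (by omega)] at hlow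
    omega

end SumPsiAux

/-- **Proposition.** `Σ_{m≥1} ψ_m(a) t^{m−1} = p^{col(a)} x^{comaj(a)} t^{des(a)}
/ ((1−t)(1−xt)⋯(1−xⁿt))`. -/
theorem sum_psi_eq_Phi (r : ℕ) (hr : 1 ≤ r) (a : CPerm)
    (ha : IsCPerm a) (hra : RColoured r a) :
    PowerSeries.mk (fun k => psi a (k + 1)) = Phi a := by
  apply PowerSeries.ext
  intro k
  rw [PowerSeries.coeff_mk, SumPsiAux.psi_eq]
  conv_rhs => rw [Phi, ← SumPsiAux.mk_Spoly, mul_assoc,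
    mul_comm (PowerSeries.X ^ des a)]
  rw [PowerSeries.coeff_C_mul, PowerSeries.coeff_mul_X_pow', PowerSeries.coeff_mk,
    mul_assoc]
end
end

section
/- Fix r ≥ 1 and work in the ring of formal power series in t over ℚ[p₀,…,p_{r−1},x,z]. For an r-coloured permutation a of length n ≥ 1, let Φ̃(a) = p^{col(a)} x^{comaj(a)} t^{des(a)+1} z^n / ((1−t)(1−xt)⋯(1−xⁿt)). Then for all symbol-disjoint r-coloured permutations a and b of positive length, Φ̃(a) *_t Φ̃(b) = Σ_{c ∈ a⧢b} Φ̃(c), where *_t is the Hadamard product in t and the sum runs over the multiset of shuffles of a and b. -/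
open scoped Classical

noncomputable section

/-- The polynomial ring `ℚ[p₀,p₁,…][x][z]`; `z` is the outer `Polynomial.X`,
`x` the inner `Polynomial.X`, and `p_j` is `MvPolynomial.X j`. -/
abbrev PXZRing : Type := Polynomial (Polynomial (MvPolynomial ℕ ℚ))

/-- The variable `x` inside `ℚ[p][x][z]`. -/
def xVar : PXZRing := Polynomial.C Polynomial.X

/-- `Φ̃(a) = p^{col(a)} x^{comaj(a)} z^{|a|} t^{des(a)+1} / ((1−t)(1−xt)⋯(1−xⁿt))`. -/
def PhiT (a : CPerm) : PowerSeries PXZRing :=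
  PowerSeries.C (R := PXZRing)
      (Polynomial.C (Polynomial.C (pMon a)) * xVar ^ comaj a * Polynomial.X ^ a.length) *
    PowerSeries.X ^ (des a + 1) *
    ∏ i ∈ Finset.range (a.length + 1), geom (xVar ^ i)

-- my defs
def dsc (p q : ℕ × ℕ) : ℕ := if cLt q p then 1 else 0

def S (k : ℕ) : (ℕ × ℕ) → ℕ → CPerm → PXZRing
  | _, _, [] => 1
  | p, v, q :: qs => ∑ w ∈ Finset.Ico (v + dsc p q) k, xVar ^ w * S k q w qs

lemma cLt_trans {p q r : ℕ × ℕ} (h1 : cLt p q) (h2 : cLt q r) : cLt p r := by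
  unfold cLt at *; omega

lemma cLt_total {p q : ℕ × ℕ} (h : p.1 ≠ q.1) : (cLt p q ∧ ¬ cLt q p) ∨ (cLt q p ∧ ¬ cLt p q) := by
  unfold cLt at *; omega

lemma shuffles_perm {α : Type*} : ∀ (a b : List α), ∀ c ∈ shuffles a b, c.Perm (a ++ b) := by
  intro a b
  induction a, b using shuffles.induct with
  | case1 bs => simp [shuffles]
  | case2 a as => simp [shuffles]
  | case3 a as b bs ih1 ih2 =>
    intro c hc
    rw [shuffles] at hc
    simp only [Multiset.mem_add, Multiset.mem_map] at hc
    rcases hc with ⟨c', hc', rfl⟩ | ⟨c', hc', rfl⟩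
    · exact (ih1 c' hc').cons a
    · refine ((ih2 c' hc').cons b).trans ?_
      exact List.perm_middle.symm

lemma dsc_triangle {p A B : ℕ × ℕ} (h : A.1 ≠ B.1) : dsc p B ≤ dsc p A + dsc A B := by
  by_cases h1 : cLt B p
  · by_cases h2 : cLt A p
    · simp [dsc, h1, h2]
    · have hBA : cLt B A := by
        rcases cLt_total h with ⟨hab, _⟩ | ⟨hba, _⟩
        · exact absurd (cLt_trans hab h1) h2
        · exact hba
      simp [dsc, h1, hBA]
  · simp [dsc, h1]

lemma rect_split {R : Type*} [AddCommMonoid R] (F G : ℕ → ℕ → R) (lo1 lo2 k d1 d2 : ℕ)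
    (hd : d1 + d2 = 1) (h2 : lo2 ≤ lo1 + d1) (h3 : lo1 ≤ lo2 + d2) :
    (∑ w1 ∈ Finset.Ico lo1 k, ∑ w2 ∈ Finset.Ico lo2 k, F w1 w2)
      = (∑ w1 ∈ Finset.Ico lo1 k, ∑ w2 ∈ Finset.Ico (w1 + d1) k, F w1 w2)
        + ∑ w2 ∈ Finset.Ico lo2 k, ∑ w1 ∈ Finset.Ico (w2 + d2) k, F w1 w2 := by
  have e1 : ∀ w1 ∈ Finset.Ico lo1 k, ∑ w2 ∈ Finset.Ico (w1 + d1) k, F w1 w2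
      = ∑ w2 ∈ Finset.Ico lo2 k, if w1 + d1 ≤ w2 then F w1 w2 else 0 := by
    intro w1 hw1
    rw [Finset.mem_Ico] at hw1
    rw [← Finset.sum_filter]
    congr 1
    ext w2
    simp only [Finset.mem_Ico, Finset.mem_filter]
    omega
  have e2 : ∀ w2 ∈ Finset.Ico lo2 k, ∑ w1 ∈ Finset.Ico (w2 + d2) k, F w1 w2
      = ∑ w1 ∈ Finset.Ico lo1 k, if ¬ (w1 + d1 ≤ w2) then F w1 w2 else 0 := by
    intro w2 hw2
    rw [Finset.mem_Ico] at hw2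
    rw [← Finset.sum_filter]
    congr 1
    ext w1
    simp only [Finset.mem_Ico, Finset.mem_filter]
    omega
  rw [Finset.sum_congr rfl e1, Finset.sum_congr rfl e2, Finset.sum_comm (s := Finset.Ico lo2 k),
    ← Finset.sum_add_distrib]
  refine Finset.sum_congr rfl fun w1 _ => ?_
  rw [← Finset.sum_add_distrib]
  refine Finset.sum_congr rfl fun w2 _ => ?_
  split_ifs <;> simp

lemma multiset_sum_map_finset_sum {α β R : Type*} [AddCommMonoid R] (M : Multiset α)
    (s : Finset β) (f : β → α → R) :
    (M.map fun c => ∑ w ∈ s, f w c).sum = ∑ w ∈ s, (M.map (f w)).sum := by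
  induction M using Multiset.induction_on with
  | empty => simp
  | cons a t ih => simp [ih, Finset.sum_add_distrib]

lemma S_nil (k : ℕ) (p : ℕ × ℕ) (v : ℕ) : S k p v [] = 1 := rfl
lemma S_cons (k : ℕ) (p : ℕ × ℕ) (v : ℕ) (q : ℕ × ℕ) (qs : CPerm) :
    S k p v (q :: qs) = ∑ w ∈ Finset.Ico (v + dsc p q) k, xVar ^ w * S k q w qs := rfl

lemma S_shuffle : ∀ (a b : CPerm), (∀ p ∈ a, ∀ q ∈ b, p.1 ≠ q.1) →
    ∀ (k : ℕ) (pr : ℕ × ℕ) (v : ℕ),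
    S k pr v a * S k pr v b = ((shuffles a b).map (S k pr v)).sum := by
  intro a b
  induction a, b using shuffles.induct with
  | case1 bs => intro _ k pr v; simp [shuffles, S_nil]
  | case2 a as => intro _ k pr v; simp [shuffles, S_nil]
  | case3 A as B bs ih1 ih2 =>
    intro hdisj k pr v
    have hAB : A.1 ≠ B.1 := hdisj A (by simp) B (by simp)
    have hd1 : (∀ p ∈ as, ∀ q ∈ B :: bs, p.1 ≠ q.1) := fun p hp q hq => hdisj p (by simp [hp]) q hq
    have hd2 : (∀ p ∈ A :: as, ∀ q ∈ bs, p.1 ≠ q.1) := fun p hp q hq => hdisj p hp q (by simp [hq])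
    rw [shuffles]
    rw [Multiset.map_add, Multiset.sum_add, Multiset.map_map, Multiset.map_map]
    have hterm1 : ((shuffles as (B :: bs)).map ((S k pr v) ∘ (A :: ·))).sum
        = ∑ w1 ∈ Finset.Ico (v + dsc pr A) k,
            xVar ^ w1 * (S k A w1 as * S k A w1 (B :: bs)) := by
      rw [show (S k pr v) ∘ (A :: ·) = fun c => ∑ w ∈ Finset.Ico (v + dsc pr A) k,
          xVar ^ w * S k A w c from funext fun c => S_cons k pr v A c]
      rw [multiset_sum_map_finset_sum]
      refine Finset.sum_congr rfl fun w1 _ => ?_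
      rw [ih1 hd1 k A w1]
      exact Multiset.sum_map_mul_left
    have hterm2 : ((shuffles (A :: as) bs).map ((S k pr v) ∘ (B :: ·))).sum
        = ∑ w2 ∈ Finset.Ico (v + dsc pr B) k,
            xVar ^ w2 * (S k B w2 (A :: as) * S k B w2 bs) := by
      rw [show (S k pr v) ∘ (B :: ·) = fun c => ∑ w ∈ Finset.Ico (v + dsc pr B) k,
          xVar ^ w * S k B w c from funext fun c => S_cons k pr v B c]
      rw [multiset_sum_map_finset_sum]
      refine Finset.sum_congr rfl fun w2 _ => ?_
      rw [ih2 hd2 k B w2]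
      exact Multiset.sum_map_mul_left
    have t1 : v + dsc pr B ≤ v + dsc pr A + dsc A B := by
      have := dsc_triangle (p := pr) hAB; omega
    have t2 : v + dsc pr A ≤ v + dsc pr B + dsc B A := by
      have := dsc_triangle (p := pr) hAB.symm; omega
    have hds : dsc A B + dsc B A = 1 := by
      rcases cLt_total hAB with ⟨h1, h2⟩ | ⟨h1, h2⟩ <;> simp [dsc, h1, h2]
    rw [hterm1, hterm2, S_cons, S_cons, Finset.sum_mul_sum,
      rect_split (fun w1 w2 => xVar ^ w1 * S k A w1 as * (xVar ^ w2 * S k B w2 bs))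
        (fun _ _ => (0 : PXZRing)) (v + dsc pr A) (v + dsc pr B) k (dsc A B) (dsc B A) hds t1 t2]
    congr 1
    · refine Finset.sum_congr rfl fun w1 _ => ?_
      rw [S_cons]
      simp only [Finset.mul_sum]
      exact Finset.sum_congr rfl fun w2 _ => by ring
    · refine Finset.sum_congr rfl fun w2 _ => ?_
      rw [S_cons]
      simp only [Finset.mul_sum, Finset.sum_mul]
      exact Finset.sum_congr rfl fun w1 _ => by ring
def N : ℕ → ℕ → ℕ → PXZRing
  | _, _, 0 => 1
  | v, m, n + 1 => ∑ w ∈ Finset.Icc v m, xVar ^ w * N w m n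

lemma N_zero (v m : ℕ) : N v m 0 = 1 := rfl
lemma N_succ (v m n : ℕ) : N v m (n + 1) = ∑ w ∈ Finset.Icc v m, xVar ^ w * N w m n := rfl

lemma N_eq_zero {v m : ℕ} (h : m < v) (n : ℕ) (hn : 1 ≤ n) : N v m n = 0 := by
  cases n with
  | zero => omega
  | succ n => rw [N_succ, Finset.Icc_eq_empty (by omega), Finset.sum_empty]

lemma N_shift : ∀ (n v m s : ℕ), N (v + s) (m + s) n = xVar ^ (s * n) * N v m n := by
  intro n
  induction n with
  | zero => simp [N_zero]
  | succ n ih =>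
    intro v m s
    rw [N_succ, N_succ, ← Finset.map_add_right_Icc, Finset.sum_map, Finset.mul_sum]
    refine Finset.sum_congr rfl fun u _ => ?_
    simp only [addRightEmbedding_apply]
    rw [ih u m s]
    ring

lemma triangle_swap {R : Type*} [AddCommMonoid R] (G : ℕ → ℕ → R) (v m : ℕ) :
    ∑ w ∈ Finset.Icc v m, ∑ j ∈ Finset.Icc w m, G w j
      = ∑ j ∈ Finset.Icc v m, ∑ w ∈ Finset.Icc v j, G w j := by
  have e1 : ∀ w ∈ Finset.Icc v m, ∑ j ∈ Finset.Icc w m, G w j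
      = ∑ j ∈ Finset.Icc v m, if w ≤ j then G w j else 0 := by
    intro w hw
    rw [Finset.mem_Icc] at hw
    rw [← Finset.sum_filter]
    congr 1
    ext j
    simp only [Finset.mem_Icc, Finset.mem_filter]
    omega
  have e2 : ∀ j ∈ Finset.Icc v m, ∑ w ∈ Finset.Icc v j, G w j
      = ∑ w ∈ Finset.Icc v m, if w ≤ j then G w j else 0 := by
    intro j hj
    rw [Finset.mem_Icc] at hj
    rw [← Finset.sum_filter]
    congr 1
    ext w
    simp only [Finset.mem_Icc, Finset.mem_filter]
    omega
  rw [Finset.sum_congr rfl e1, Finset.sum_congr rfl e2, Finset.sum_comm]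

lemma N_peel_top : ∀ (n v m : ℕ), N v m (n + 1) = ∑ j ∈ Finset.Icc v m, xVar ^ j * N v j n := by
  intro n
  induction n with
  | zero => simp [N_succ, N_zero]
  | succ n ih =>
    intro v m
    rw [N_succ]
    have lhs : ∑ w ∈ Finset.Icc v m, xVar ^ w * N w m (n + 1)
        = ∑ w ∈ Finset.Icc v m, ∑ j ∈ Finset.Icc w m, xVar ^ w * (xVar ^ j * N w j n) := by
      refine Finset.sum_congr rfl fun w _ => ?_
      rw [ih w m, Finset.mul_sum]
    rw [lhs, triangle_swap (fun w j => xVar ^ w * (xVar ^ j * N w j n)) v m]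
    refine Finset.sum_congr rfl fun j _ => ?_
    rw [N_succ, Finset.mul_sum]
    refine Finset.sum_congr rfl fun w _ => ?_
    ring
lemma dsc_le_one (p q : ℕ × ℕ) : dsc p q ≤ 1 := by
  unfold dsc; split_ifs <;> omega

def Edes : (ℕ × ℕ) → CPerm → ℕ
  | _, [] => 0
  | p, q :: qs => dsc p q + Edes q qs

def cmj : (ℕ × ℕ) → CPerm → ℕ
  | _, [] => 0
  | p, q :: qs => dsc p q * (qs.length + 1) + cmj q qs

lemma S_eq_N : ∀ (l : CPerm) (p : ℕ × ℕ) (v k : ℕ), Edes p l + 1 ≤ k →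
    S k p v l = xVar ^ cmj p l * N v (k - 1 - Edes p l) l.length := by
  intro l
  induction l with
  | nil => intro p v k _; simp [S_nil, Edes, cmj, N_zero]
  | cons q qs ih =>
    intro p v k hk
    obtain ⟨d, hd⟩ : ∃ d, d = dsc p q := ⟨_, rfl⟩
    obtain ⟨E', hE'⟩ : ∃ e, e = Edes q qs := ⟨_, rfl⟩
    obtain ⟨n', hn'⟩ : ∃ n, n = qs.length := ⟨_, rfl⟩
    obtain ⟨M, hM⟩ : ∃ m, m = k - 1 - d - E' := ⟨_, rfl⟩
    have hE : Edes p (q :: qs) = d + E' := by rw [hd, hE']; rfl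
    have hc : cmj p (q :: qs) = d * (n' + 1) + cmj q qs := by rw [hd, hn']; rfl
    rw [hE] at hk ⊢
    rw [S_cons, ← hd]
    have expand : ∀ w ∈ Finset.Ico (v + d) k, xVar ^ w * S k q w qs
        = xVar ^ w * (xVar ^ cmj q qs * N w (M + d) n') := by
      intro w _
      rw [ih q w k (by omega), ← hE', ← hn', show k - 1 - E' = M + d from by omega]
    rw [Finset.sum_congr rfl expand]
    have key : ∑ w ∈ Finset.Ico (v + d) k, xVar ^ w * (xVar ^ cmj q qs * N w (M + d) n')
        = xVar ^ (d * (n' + 1)) *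
          ∑ u ∈ Finset.Icc v M, xVar ^ u * (xVar ^ cmj q qs * N u M n') := by
      have hE0 : n' = 0 → E' = 0 := by
        intro h0
        cases qs with
        | nil => rw [hE']; rfl
        | cons _ _ => rw [h0] at hn'; simp at hn' 
      by_cases hv : v ≤ M + 1
      · have hsplit : Finset.Ico (v + d) k
            = Finset.Ico (v + d) (M + 1 + d) ∪ Finset.Ico (M + 1 + d) k := by
          rw [Finset.Ico_union_Ico_eq_Ico (by omega) (by omega)]
        have hdisj : Disjoint (Finset.Ico (v + d) (M + 1 + d)) (Finset.Ico (M + 1 + d) k) :=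
          Finset.Ico_disjoint_Ico_consecutive _ _ _
        rw [hsplit, Finset.sum_union hdisj]
        have h2zero : ∑ w ∈ Finset.Ico (M + 1 + d) k,
            xVar ^ w * (xVar ^ cmj q qs * N w (M + d) n') = 0 := by
          rcases Nat.eq_zero_or_pos n' with h0 | h1
          · rw [Finset.Ico_eq_empty (by have := hE0 h0; omega), Finset.sum_empty]
          · refine Finset.sum_eq_zero fun w hw => ?_
            rw [Finset.mem_Ico] at hw
            rw [N_eq_zero (by omega) n' h1, mul_zero, mul_zero]
        rw [h2zero, add_zero]
        have himg : Finset.Ico (v + d) (M + 1 + d) = (Finset.Icc v M).map (addRightEmbedding d) := by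
          ext w
          simp only [Finset.mem_Ico, Finset.mem_map, Finset.mem_Icc, addRightEmbedding_apply]
          constructor
          · intro hw; exact ⟨w - d, by omega, by omega⟩
          · rintro ⟨u, hu, rfl⟩; omega
        rw [himg, Finset.sum_map, Finset.mul_sum]
        refine Finset.sum_congr rfl fun u _ => ?_
        simp only [addRightEmbedding_apply]
        rw [N_shift n' u M d]
        ring
      · have hIcc : Finset.Icc v M = ∅ := Finset.Icc_eq_empty (by omega)
        rw [hIcc, Finset.sum_empty, mul_zero]
        rcases Nat.eq_zero_or_pos n' with h0 | h1
        · rw [Finset.Ico_eq_empty (by have := hE0 h0; omega), Finset.sum_empty]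
        · refine Finset.sum_eq_zero fun w hw => ?_
          rw [Finset.mem_Ico] at hw
          rw [N_eq_zero (by omega) n' h1, mul_zero, mul_zero]
    rw [key, hc, List.length_cons, ← hn', show k - 1 - (d + E') = M from by omega, N_succ,
      Finset.mul_sum, Finset.mul_sum]
    exact Finset.sum_congr rfl fun u _ => by ring

lemma S_eq_zero : ∀ (l : CPerm) (p : ℕ × ℕ) (v k : ℕ), l ≠ [] → k ≤ Edes p l →
    S k p v l = 0 := by
  intro l
  induction l with
  | nil => intro p v k h _; exact absurd rfl h
  | cons q qs ih =>
    intro p v k _ hk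
    have hE : Edes p (q :: qs) = dsc p q + Edes q qs := rfl
    rw [hE] at hk
    rw [S_cons]
    rcases Nat.lt_or_ge (Edes q qs) k with hlt | hge
    · have hd1 : dsc p q = 1 := by have := dsc_le_one p q; omega
      have hkE : k = Edes q qs + 1 := by have := dsc_le_one p q; omega
      refine Finset.sum_eq_zero fun w hw => ?_
      rw [Finset.mem_Ico] at hw
      cases qs with
      | nil =>
        exfalso
        have : Edes q ([] : CPerm) = 0 := rfl
        omega
      | cons r rs =>
        rw [S_eq_N _ q w k (by omega)]
        have h1 : 1 ≤ (r :: rs : CPerm).length := by simp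
        rw [N_eq_zero (by omega) _ h1, mul_zero, mul_zero]
    · refine Finset.sum_eq_zero fun w hw => ?_
      cases qs with
      | nil =>
        exfalso
        rw [Finset.mem_Ico] at hw
        have : Edes q ([] : CPerm) = 0 := rfl
        omega
      | cons r rs =>
        rw [ih q w k (by simp) hge, mul_zero]
def prevL (q : ℕ × ℕ) (a : CPerm) (i : ℕ) : ℕ × ℕ := if i = 0 then q else a.getD (i - 1) (0, 0)

lemma prevL_succ (q r : ℕ × ℕ) (rs : CPerm) (i : ℕ) :
    prevL q (r :: rs) (i + 1) = prevL r rs i := by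
  cases i with
  | zero => rfl
  | succ j => simp [prevL]

lemma Edes_eq_sum : ∀ (a : CPerm) (q : ℕ × ℕ),
    Edes q a = ∑ i ∈ Finset.range a.length,
      (if cLt (a.getD i (0, 0)) (prevL q a i) then 1 else 0) := by
  intro a
  induction a with
  | nil => intro q; simp [Edes]
  | cons r rs ih =>
    intro q
    rw [List.length_cons, Finset.sum_range_succ']
    have h0 : (if cLt ((r :: rs).getD 0 (0, 0)) (prevL q (r :: rs) 0) then 1 else 0)
        = dsc q r := by
      simp [prevL, dsc]
    have hs : ∀ i, (if cLt ((r :: rs).getD (i + 1) (0, 0)) (prevL q (r :: rs) (i + 1)) then 1 else 0)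
        = (if cLt (rs.getD i (0, 0)) (prevL r rs i) then 1 else 0) := by
      intro i
      rw [prevL_succ, List.getD_cons_succ]
    rw [Finset.sum_congr rfl fun i _ => hs i, h0, ← ih r]
    show Edes q (r :: rs) = _
    rw [show Edes q (r :: rs) = dsc q r + Edes r rs from rfl]
    ring

lemma cmj_eq_sum : ∀ (a : CPerm) (q : ℕ × ℕ),
    cmj q a = ∑ i ∈ Finset.range a.length,
      (if cLt (a.getD i (0, 0)) (prevL q a i) then a.length - i else 0) := by
  intro a
  induction a with
  | nil => intro q; simp [cmj]
  | cons r rs ih =>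
    intro q
    rw [List.length_cons, Finset.sum_range_succ']
    have h0 : (if cLt ((r :: rs).getD 0 (0, 0)) (prevL q (r :: rs) 0)
          then rs.length + 1 - 0 else 0)
        = dsc q r * (rs.length + 1) := by
      simp [prevL, dsc, ite_mul]
    have hs : ∀ i, (if cLt ((r :: rs).getD (i + 1) (0, 0)) (prevL q (r :: rs) (i + 1))
          then rs.length + 1 - (i + 1) else 0)
        = (if cLt (rs.getD i (0, 0)) (prevL r rs i) then rs.length - i else 0) := by
      intro i
      rw [prevL_succ, List.getD_cons_succ, Nat.succ_sub_succ]
    rw [Finset.sum_congr rfl fun i _ => hs i, h0, ← ih r]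
    rw [show cmj q (r :: rs) = dsc q r * (rs.length + 1) + cmj r rs from rfl]
    ring

lemma cLt_zero (p : ℕ × ℕ) : cLt p (0, 0) ↔ p.2 ≠ 0 := by
  unfold cLt; omega

lemma des_cond_iff (a : CPerm) (i : ℕ) :
    (if i = 0 then (a.getD 0 (0, 0)).2 ≠ 0
      else cLt (a.getD i (0, 0)) (a.getD (i - 1) (0, 0)))
    ↔ cLt (a.getD i (0, 0)) (prevL (0, 0) a i) := by
  cases i with
  | zero =>
    rw [if_pos rfl]
    have h : prevL (0, 0) a 0 = (0, 0) := rfl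
    rw [h, cLt_zero]
  | succ j =>
    rw [if_neg (Nat.succ_ne_zero j)]
    have h : prevL (0, 0) a (j + 1) = a.getD j (0, 0) := rfl
    rw [h]
    rfl

lemma des_eq (a : CPerm) : des a = Edes (0, 0) a := by
  rw [des, DesSet, Finset.card_filter, Edes_eq_sum]
  exact Finset.sum_congr rfl fun i _ => if_congr (des_cond_iff a i) rfl rfl

lemma comaj_eq (a : CPerm) : comaj a = cmj (0, 0) a := by
  rw [comaj, DesSet, Finset.sum_filter, cmj_eq_sum]
  exact Finset.sum_congr rfl fun i _ => if_congr (des_cond_iff a i) rfl rfl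
lemma coeff_geom {R : Type*} [Semiring R] (c : R) (k : ℕ) :
    PowerSeries.coeff (R := R) k (geom c) = c ^ k := PowerSeries.coeff_mk _ _

lemma rescale_geom {R : Type*} [CommSemiring R] (a c : R) :
    PowerSeries.rescale a (geom c) = geom (a * c) := by
  ext k
  rw [PowerSeries.coeff_rescale, coeff_geom, coeff_geom, mul_pow]

lemma coeff_prod_geom : ∀ (n m : ℕ),
    PowerSeries.coeff (R := PXZRing) m (∏ i ∈ Finset.range (n + 1), geom (xVar ^ i)) = N 0 m n := by
  intro n
  induction n with
  | zero =>
    intro m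
    simp only [zero_add, Finset.prod_range_one, pow_zero, coeff_geom, one_pow, N_zero]
  | succ n ih =>
    intro m
    rw [Finset.prod_range_succ']
    have hres : ∏ i ∈ Finset.range (n + 1), geom (xVar ^ (i + 1))
        = PowerSeries.rescale xVar (∏ i ∈ Finset.range (n + 1), geom (xVar ^ i)) := by
      rw [map_prod]
      exact Finset.prod_congr rfl fun i _ => by
        rw [rescale_geom, ← pow_succ']
    rw [hres, pow_zero, PowerSeries.coeff_mul, Finset.Nat.sum_antidiagonal_eq_sum_range_succ_mk]
    have hterm : ∀ j ∈ Finset.range (m + 1),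
        PowerSeries.coeff (R := PXZRing) j (PowerSeries.rescale xVar
            (∏ i ∈ Finset.range (n + 1), geom (xVar ^ i)))
          * PowerSeries.coeff (R := PXZRing) (m - j) (geom 1)
        = xVar ^ j * N 0 j n := by
      intro j _
      erw [PowerSeries.coeff_rescale, coeff_geom, one_pow, mul_one, ih j]
    rw [Finset.sum_congr rfl hterm]
    have : N 0 m (n + 1) = ∑ j ∈ Finset.Icc 0 m, xVar ^ j * N 0 j n := N_peel_top n 0 m
    rw [this]
    refine Finset.sum_congr ?_ fun _ _ => rfl
    ext i
    simp only [Finset.mem_range, Finset.mem_Icc]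
    omega

lemma coeff_PhiT (a : CPerm) (ha : 1 ≤ a.length) (k : ℕ) :
    PowerSeries.coeff (R := PXZRing) k (PhiT a)
      = Polynomial.C (Polynomial.C (pMon a)) * Polynomial.X ^ a.length * S k (0, 0) 0 a := by
  have hre : PhiT a
      = (PowerSeries.C (R := PXZRing)
            (Polynomial.C (Polynomial.C (pMon a)) * xVar ^ comaj a * Polynomial.X ^ a.length)
          * ∏ i ∈ Finset.range (a.length + 1), geom (xVar ^ i)) * PowerSeries.X ^ (des a + 1) := by
    rw [PhiT]; ring
  rw [hre, PowerSeries.coeff_mul_X_pow']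
  by_cases hk : des a + 1 ≤ k
  · rw [if_pos hk, PowerSeries.coeff_C_mul, coeff_prod_geom]
    rw [S_eq_N a (0, 0) 0 k (by rw [← des_eq]; omega), ← des_eq, ← comaj_eq]
    have h2 : k - (des a + 1) = k - 1 - des a := by omega
    rw [h2]
    ring
  · rw [if_neg hk,
      S_eq_zero a (0, 0) 0 k (by intro h; rw [h] at ha; simp at ha) (by rw [← des_eq]; omega),
      mul_zero]

lemma length_shuffle {a b c : CPerm} (h : c ∈ shuffles a b) :
    c.length = a.length + b.length := by
  simpa using (shuffles_perm a b c h).length_eq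

lemma pMon_shuffle {a b c : CPerm} (h : c ∈ shuffles a b) : pMon c = pMon a * pMon b := by
  have hp := ((shuffles_perm a b c h).map (fun p => (MvPolynomial.X p.2 : MvPolynomial ℕ ℚ))).prod_eq
  rw [pMon, hp, List.map_append, List.prod_append, pMon, pMon]

/-- **Corollary.** For symbol-disjoint `r`-coloured permutations `a, b` of positive
length: `Φ̃(a) *_t Φ̃(b) = Σ_{c ∈ a⧢b} Φ̃(c)`. -/
theorem hadamard_PhiT_eq_sum_shuffles (r : ℕ) (hr : 1 ≤ r) (a b : CPerm)
    (ha : IsCPerm a) (hb : IsCPerm b)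
    (hra : RColoured r a) (hrb : RColoured r b)
    (hna : 1 ≤ a.length) (hnb : 1 ≤ b.length)
    (hd : SymbolDisjoint a b) :
    hadamard (PhiT a) (PhiT b) = ((shuffles a b).map PhiT).sum := by
  have hdisj : ∀ p ∈ a, ∀ q ∈ b, p.1 ≠ q.1 := by
    intro p hp q hq heq
    have h1 : p.1 ∈ symbols a := by
      rw [symbols, List.mem_toFinset]
      exact List.mem_map.mpr ⟨p, hp, rfl⟩
    have h2 : p.1 ∈ symbols b := by
      rw [symbols, List.mem_toFinset, heq]
      exact List.mem_map.mpr ⟨q, hq, rfl⟩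
    exact Finset.disjoint_left.mp hd h1 h2
  ext k
  rw [hadamard, PowerSeries.coeff_mk, coeff_PhiT a hna k, coeff_PhiT b hnb k]
  have hR : PowerSeries.coeff (R := PXZRing) k ((shuffles a b).map PhiT).sum
      = ((shuffles a b).map fun c => PowerSeries.coeff (R := PXZRing) k (PhiT c)).sum := by
    rw [map_multiset_sum, Multiset.map_map]
    rfl
  rw [hR]
  have hc : ∀ c ∈ shuffles a b, PowerSeries.coeff (R := PXZRing) k (PhiT c)
      = (Polynomial.C (Polynomial.C (pMon a)) * Polynomial.X ^ a.length
          * (Polynomial.C (Polynomial.C (pMon b)) * Polynomial.X ^ b.length))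
        * S k (0, 0) 0 c := by
    intro c hcm
    have hlen : 1 ≤ c.length := by rw [length_shuffle hcm]; omega
    rw [coeff_PhiT c hlen k, pMon_shuffle hcm, length_shuffle hcm, pow_add]
    simp only [map_mul]
    ring
  rw [Multiset.map_congr rfl hc, Multiset.sum_map_mul_left, ← S_shuffle a b hdisj k (0, 0) 0]
  ring

end
end

section
/- Let n ≥ 1 and let d₁,…,d_n be integers with d_i ≥ 1. Then in ℚ(X)⟦Y⟧, the n-fold Hadamard product in Y satisfies ⊛_{i=1}^n (1 − X^{1−d_i}Y)/((1−Y)(1−XY)) = ( Σ_{a ∈ Π(S_n)} α(a) · X^{comaj(a)} Y^{des(a)} ) / ((1−Y)(1−XY)(1−X²Y)⋯(1−XⁿY)), where for a = σ₁^{γ₁}⋯σ_n^{γ_n} ∈ Π(S_n) one sets α(a) = Π_{i : γ_i ≠ 0} (−X^{−d_{σ_i}}). (This identity computes, after substituting X ← q and rescaling Y, the class-counting zeta function of a direct product F_{2,d₁} × ⋯ × F_{2,d_n} of free class-2-nilpotent group schemes over a compact discrete valuation ring with odd residue field cardinality q.) -/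
open scoped Classical

noncomputable section

/-- The set `Π(S_n)` of all `2^n · n!` coloured permutations `σ₁^{γ₁}⋯σ_n^{γ_n}`
with `σ₁⋯σ_n` a permutation of `[n]` and `γ_i ∈ {0, σ_i}`. -/
def PiSn (n : ℕ) : Multiset CPerm :=
  (Finset.univ : Finset (Equiv.Perm (Fin n) × (Fin n → Bool))).val.map fun sg =>
    List.ofFn fun i : Fin n =>
      ((sg.1 i : ℕ) + 1, if sg.2 i then (sg.1 i : ℕ) + 1 else 0)

/-- `α(a) = Π_{i : γ_i ≠ 0} (−X^{−d_{σ_i}})`. -/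
def alphaD (d : ℕ → ℕ) (a : CPerm) : K :=
  (a.map fun p => if p.2 ≠ 0 then -XX ^ (-(d p.1 : ℤ)) else (1 : K)).prod

/-- The iterated (`n`-fold) Hadamard product of a list of power series
(the all-ones series `1/(1−Y)` is the Hadamard identity). -/
def hadamardProdList {R : Type*} [Semiring R] (l : List (PowerSeries R)) :
    PowerSeries R :=
  l.foldr hadamard (geom 1)

namespace F2D
open PowerSeries Finset

lemma coeff_geom (c : K) (k : ℕ) : PowerSeries.coeff (R := K) k (geom c) = c ^ k := by
  simp [geom]

lemma coeff_hadamard (A B : PowerSeries K) (k : ℕ) :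
    PowerSeries.coeff (R := K) k (hadamard A B) =
      PowerSeries.coeff (R := K) k A * PowerSeries.coeff (R := K) k B := by
  simp [hadamard]

lemma hadamard_one_left (A : PowerSeries K) : hadamard (geom 1) A = A := by
  ext k; simp [coeff_hadamard, coeff_geom]

lemma hadamard_one_right (A : PowerSeries K) : hadamard A (geom 1) = A := by
  ext k; simp [coeff_hadamard, coeff_geom]

lemma hadamard_assoc (A B C' : PowerSeries K) :
    hadamard (hadamard A B) C' = hadamard A (hadamard B C') := by
  ext k; simp [coeff_hadamard, mul_assoc]

lemma hadamard_comm (A B : PowerSeries K) : hadamard A B = hadamard B A := by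
  ext k; simp [coeff_hadamard, mul_comm]

def sig (m : ℕ) : K := ∑ r ∈ Finset.range m, XX ^ r

def Kn (n : ℕ) : PowerSeries K := ∏ i ∈ Finset.range (n + 1), geom (XX ^ (i : ℕ))

def g (n t : ℕ) : K := PowerSeries.coeff (R := K) t (Kn n)

lemma sig_add (a b : ℕ) : sig (a + b) = sig a + XX ^ a * sig b := by
  simp [sig, Finset.sum_range_add, Finset.mul_sum, pow_add]

lemma geom_mul_one_sub (c : K) :
    geom c * (1 - PowerSeries.C (R := K) c * PowerSeries.X) = 1 := by
  ext k
  rw [mul_sub, mul_one, map_sub]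
  have h : geom c * (PowerSeries.C (R := K) c * PowerSeries.X) =
      PowerSeries.C (R := K) c * (geom c * PowerSeries.X) := by ring
  rw [h]
  cases k with
  | zero => simp [coeff_geom]
  | succ k =>
      rw [PowerSeries.coeff_C_mul, PowerSeries.coeff_succ_mul_X]
      simp [coeff_geom, pow_succ, mul_comm]

lemma constantCoeff_Kn (n : ℕ) : PowerSeries.coeff (R := K) 0 (Kn n) = 1 := by
  rw [PowerSeries.coeff_zero_eq_constantCoeff, Kn, map_prod]
  simp [geom, PowerSeries.constantCoeff_mk]

lemma g_zero (n : ℕ) : g n 0 = 1 := constantCoeff_Kn n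

lemma g_zero_left (t : ℕ) : g 0 t = 1 := by
  simp [g, Kn, coeff_geom]

lemma Kn_succ (n : ℕ) : Kn (n + 1) = Kn n * geom (XX ^ (n + 1)) := by
  rw [Kn, Kn, Finset.prod_range_succ]

lemma pascal1 (n t : ℕ) :
    g (n + 1) (t + 1) = g n (t + 1) + XX ^ (n + 1) * g (n + 1) t := by
  have h : Kn (n + 1) * (1 - PowerSeries.C (R := K) (XX ^ (n + 1)) * PowerSeries.X) = Kn n := by
    rw [Kn_succ, mul_assoc, geom_mul_one_sub, mul_one]
  have h2 := congrArg (PowerSeries.coeff (R := K) (t + 1)) h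
  rw [mul_sub, mul_one, map_sub] at h2
  have h3 : Kn (n + 1) * (PowerSeries.C (R := K) (XX ^ (n + 1)) * PowerSeries.X) =
      PowerSeries.C (R := K) (XX ^ (n + 1)) * (Kn (n + 1) * PowerSeries.X) := by ring
  rw [h3, PowerSeries.coeff_C_mul, PowerSeries.coeff_succ_mul_X] at h2
  unfold g
  linear_combination h2

lemma rescale_Kn (n : ℕ) :
    PowerSeries.rescale XX (Kn n) = ∏ i ∈ Finset.range (n + 1), geom (XX ^ (i + 1)) := by
  rw [Kn, map_prod]
  refine Finset.prod_congr rfl fun i _ => ?_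
  ext k
  rw [PowerSeries.coeff_rescale]
  simp [coeff_geom, mul_pow, pow_add, pow_mul, mul_comm, mul_left_comm, pow_right_comm]

lemma Kn_mul_one_sub (n : ℕ) :
    Kn (n + 1) * (1 - PowerSeries.X) = PowerSeries.rescale XX (Kn n) := by
  rw [rescale_Kn, Kn]
  have h : ∏ i ∈ Finset.range (n + 2), geom (XX ^ (i : ℕ)) =
      (∏ i ∈ Finset.range (n + 1), geom (XX ^ (i + 1))) * geom (XX ^ (0 : ℕ)) :=
    Finset.prod_range_succ' _ _
  rw [h, mul_assoc]
  have : geom ((XX : K) ^ (0 : ℕ)) * (1 - PowerSeries.X) = 1 := by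
    have := geom_mul_one_sub (1 : K)
    simpa using this
  rw [this, mul_one]

lemma pascal2 (n t : ℕ) :
    g (n + 1) (t + 1) = g (n + 1) t + XX ^ (t + 1) * g n (t + 1) := by
  have h := congrArg (PowerSeries.coeff (R := K) (t + 1)) (Kn_mul_one_sub n)
  rw [mul_sub, mul_one, map_sub, PowerSeries.coeff_succ_mul_X,
    PowerSeries.coeff_rescale] at h
  unfold g
  linear_combination h

end F2D
namespace F2D
open PowerSeries Finset

lemma sig_one : sig 1 = 1 := by simp [sig]
lemma sig_zero : sig 0 = 0 := by simp [sig]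

lemma g_one (t : ℕ) : g 1 t = sig (t + 1) := by
  induction t with
  | zero => rw [g_zero, sig_one]
  | succ t ih =>
      rw [pascal2 0 t, ih, g_zero_left, sig_add (t+1) 1, sig_one, mul_one]

lemma KM : ∀ n t : ℕ,
    (sig (n + 1) * g (n + 1) t = sig (n + t + 1) * g n t) ∧
    (sig (t + 1) * g n (t + 1) = sig (n + t + 1) * g n t) := by
  intro n
  induction n with
  | zero =>
      intro t
      constructor
      · rw [sig_one, one_mul, g_one, g_zero_left, mul_one, Nat.zero_add]
      · rw [g_zero_left, g_zero_left, mul_one, mul_one, Nat.zero_add]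
  | succ n ih =>
      have hM : ∀ t, sig (t + 1) * g (n + 1) (t + 1) = sig (n + 1 + t + 1) * g (n + 1) t := by
        intro t
        have hp := pascal2 n t
        have h1 := (ih t).1
        have h2 := (ih t).2
        have hs : sig (t + 1) + XX ^ (t + 1) * sig (n + 1) = sig (n + 1 + t + 1) := by
          rw [← sig_add]; ring_nf
        calc sig (t + 1) * g (n + 1) (t + 1)
            = sig (t+1) * g (n+1) t + XX ^ (t+1) * (sig (t+1) * g n (t+1)) := by
              rw [hp]; ring
          _ = sig (t+1) * g (n+1) t + XX ^ (t+1) * (sig (n+1) * g (n+1) t) := by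
              rw [h2, h1]
          _ = (sig (t + 1) + XX ^ (t + 1) * sig (n + 1)) * g (n + 1) t := by ring
          _ = _ := by rw [hs]
      intro t
      refine ⟨?_, hM t⟩
      induction t with
      | zero => rw [g_zero, g_zero]
      | succ t iht =>
          have hp := pascal1 (n + 1) t
          have hs : sig (n + 2) + XX ^ (n + 2) * sig (t + 1) = sig (n + 1 + (t+1) + 1) := by
            rw [← sig_add]; ring_nf
          calc sig (n + 1 + 1) * g (n + 1 + 1) (t + 1)
              = sig (n+2) * g (n+1) (t+1) + XX ^ (n+2) * (sig (n+2) * g (n+2) t) := by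
                rw [hp]; ring
            _ = sig (n+2) * g (n+1) (t+1) + XX ^ (n+2) * (sig (n + 1 + t + 1) * g (n+1) t) := by
                rw [iht]
            _ = sig (n+2) * g (n+1) (t+1) + XX ^ (n+2) * (sig (t + 1) * g (n+1) (t+1)) := by
                rw [hM t]
            _ = (sig (n + 2) + XX ^ (n + 2) * sig (t + 1)) * g (n + 1) (t+1) := by ring
            _ = _ := by rw [hs]

lemma J (n t : ℕ) : sig (n + 1) * g (n + 1) t = sig (t + 1) * g n (t + 1) := by
  rw [(KM n t).1, (KM n t).2]

lemma H1plus (n s t : ℕ) (hs : s ≤ n) :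
    sig (s + t + 2) * g n (t + 1) =
      sig (s + 1) * g (n + 1) (t + 1) + XX ^ (s + 1) * sig (n - s) * g (n + 1) t := by
  have hp := pascal1 n t
  have hns : s + 1 + (n - s) = n + 1 := by omega
  have hx : XX ^ (n + 1) = XX ^ (s + 1) * XX ^ (n - s) := by
    rw [← pow_add]; congr 1; omega
  have hs2 : sig (s + 1) * XX ^ (n + 1) + XX ^ (s + 1) * sig (n - s) =
      XX ^ (s + 1) * sig (n + 1) := by
    have h2 := sig_add (n - s) (s + 1)
    have hns' : n - s + (s + 1) = n + 1 := by omega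
    rw [hns'] at h2
    have hx' : XX ^ (n + 1) = XX ^ (n - s) * XX ^ (s + 1) := by
      rw [← pow_add]; congr 1; omega
    rw [h2, hx']; ring
  have hJ := J n t
  symm
  calc sig (s+1) * g (n+1) (t+1) + XX ^ (s+1) * sig (n-s) * g (n+1) t
      = sig (s+1) * g n (t+1) + (sig (s+1) * XX ^ (n+1) + XX ^ (s+1) * sig (n-s)) * g (n+1) t := by
        rw [hp]; ring
    _ = sig (s+1) * g n (t+1) + XX ^ (s+1) * (sig (n+1) * g (n+1) t) := by rw [hs2]; ring
    _ = sig (s+1) * g n (t+1) + XX ^ (s+1) * (sig (t+1) * g n (t+1)) := by rw [hJ]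
    _ = (sig (s+1) + XX ^ (s+1) * sig (t+1)) * g n (t+1) := by ring
    _ = sig (s + t + 2) * g n (t+1) := by
        have e : (s + 1) + (t + 1) = s + t + 2 := by omega
        rw [← sig_add, e]

lemma H2plus (n s t : ℕ) (hs : s ≤ n) :
    sig (s + t + 1) * g n (t + 1) =
      sig s * g (n + 1) (t + 1) + XX ^ s * sig (n + 1 - s) * g (n + 1) t := by
  cases s with
  | zero =>
      rw [sig_zero]
      simp only [zero_mul, zero_add, pow_zero, one_mul, Nat.sub_zero, Nat.zero_add]
      exact (J n t).symm
  | succ s =>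
      have h := H1plus n s t (by omega)
      have e1 : n + 1 - (s + 1) = n - s := by omega
      have e2 : s + 1 + t + 1 = s + t + 2 := by omega
      rw [e1, e2]
      exact h

end F2D
namespace F2D
open PowerSeries Finset

lemma coeff_term (m u k : ℕ) (a : K) :
    PowerSeries.coeff (R := K) k (PowerSeries.C (R := K) a * (PowerSeries.X ^ u * Kn m)) =
      a * (if u ≤ k then g m (k - u) else 0) := by
  rw [PowerSeries.coeff_C_mul, mul_comm (PowerSeries.X ^ u) (Kn m),
    PowerSeries.coeff_mul_X_pow']
  rfl

lemma geom1_geomXX : geom (1 : K) * geom XX = Kn 1 := by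
  rw [Kn]
  rw [Finset.prod_range_succ, Finset.prod_range_one]
  norm_num

lemma coeff_kernel1 (k : ℕ) :
    PowerSeries.coeff (R := K) k (geom (1 : K) * geom XX) = sig (k + 1) := by
  rw [geom1_geomXX]; exact g_one k

lemma coeff_kernel1_X (k : ℕ) :
    PowerSeries.coeff (R := K) k (geom (1 : K) * geom XX * PowerSeries.X) = sig k := by
  cases k with
  | zero => rw [PowerSeries.coeff_zero_mul_X, sig_zero]
  | succ k => rw [PowerSeries.coeff_succ_mul_X, coeff_kernel1]

lemma H1k (n s k : ℕ) (hs : s ≤ n) :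
    sig (k + 1) * (if s ≤ k then g n (k - s) else 0) =
      sig (s + 1) * (if s ≤ k then g (n + 1) (k - s) else 0) +
        XX ^ (s + 1) * sig (n - s) * (if s + 1 ≤ k then g (n + 1) (k - (s + 1)) else 0) := by
  rcases Nat.lt_trichotomy k s with h | h | h
  · rw [if_neg (by omega), if_neg (by omega), if_neg (by omega)]; ring
  · subst h
    rw [if_pos le_rfl, if_pos le_rfl, if_neg (by omega), Nat.sub_self, g_zero, g_zero]
    ring
  · obtain ⟨t, rfl⟩ : ∃ t, k = s + t + 1 := ⟨k - s - 1, by omega⟩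
    rw [if_pos (by omega), if_pos (by omega), if_pos (by omega)]
    have e1 : s + t + 1 - s = t + 1 := by omega
    have e2 : s + t + 1 - (s + 1) = t := by omega
    rw [e1, e2]
    have e3 : s + t + 1 + 1 = s + t + 2 := by omega
    rw [e3]
    exact H1plus n s t hs

lemma H2k (n s k : ℕ) (hs : s ≤ n) :
    sig k * (if s ≤ k then g n (k - s) else 0) =
      sig s * (if s ≤ k then g (n + 1) (k - s) else 0) +
        XX ^ s * sig (n + 1 - s) * (if s + 1 ≤ k then g (n + 1) (k - (s + 1)) else 0) := by
  rcases Nat.lt_trichotomy k s with h | h | h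
  · rw [if_neg (by omega), if_neg (by omega), if_neg (by omega)]; ring
  · subst h
    rw [if_pos le_rfl, if_pos le_rfl, if_neg (by omega), Nat.sub_self, g_zero, g_zero]
    ring
  · obtain ⟨t, rfl⟩ : ∃ t, k = s + t + 1 := ⟨k - s - 1, by omega⟩
    rw [if_pos (by omega), if_pos (by omega), if_pos (by omega)]
    have e1 : s + t + 1 - s = t + 1 := by omega
    have e2 : s + t + 1 - (s + 1) = t := by omega
    rw [e1, e2]
    exact H2plus n s t hs

lemma sum_Ico_pow (u v : ℕ) :
    ∑ r ∈ Finset.Ico u v, (XX : K) ^ r = XX ^ u * sig (v - u) := by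
  rw [Finset.sum_Ico_eq_sum_range, sig, Finset.mul_sum]
  exact Finset.sum_congr rfl fun r _ => by rw [pow_add]

lemma hadamard_step (n s : ℕ) (hs : s ≤ n) (c : K) :
    hadamard ((1 - PowerSeries.C (R := K) c * PowerSeries.X) * geom 1 * geom XX)
        (PowerSeries.X ^ s * Kn n) =
      PowerSeries.C (R := K) (sig (s + 1)) * (PowerSeries.X ^ s * Kn (n + 1)) +
        PowerSeries.C (R := K) (XX ^ (s + 1) * sig (n - s)) *
          (PowerSeries.X ^ (s + 1) * Kn (n + 1)) -
        PowerSeries.C (R := K) c *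
          (PowerSeries.C (R := K) (sig s) * (PowerSeries.X ^ s * Kn (n + 1)) +
            PowerSeries.C (R := K) (XX ^ s * sig (n + 1 - s)) *
              (PowerSeries.X ^ (s + 1) * Kn (n + 1))) := by
  ext k
  rw [coeff_hadamard]
  have hA : (1 - PowerSeries.C (R := K) c * PowerSeries.X) * geom 1 * geom XX =
      geom 1 * geom XX - PowerSeries.C (R := K) c * (geom 1 * geom XX * PowerSeries.X) := by
    ring
  rw [hA, map_sub, PowerSeries.coeff_C_mul, coeff_kernel1, coeff_kernel1_X]
  have hB : PowerSeries.coeff (R := K) k (PowerSeries.X ^ s * Kn n) =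
      (if s ≤ k then g n (k - s) else 0) := by
    rw [mul_comm, PowerSeries.coeff_mul_X_pow']; rfl
  rw [hB]
  have hB1 : PowerSeries.coeff (R := K) k (PowerSeries.X ^ s * Kn (n + 1)) =
      (if s ≤ k then g (n + 1) (k - s) else 0) := by
    rw [mul_comm, PowerSeries.coeff_mul_X_pow']; rfl
  have hB2 : PowerSeries.coeff (R := K) k (PowerSeries.X ^ (s + 1) * Kn (n + 1)) =
      (if s + 1 ≤ k then g (n + 1) (k - (s + 1)) else 0) := by
    rw [mul_comm, PowerSeries.coeff_mul_X_pow']; rfl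
  simp only [map_sub, map_add, PowerSeries.coeff_C_mul, hB1, hB2]
  have h1 := H1k n s k hs
  have h2 := H2k n s k hs
  linear_combination h1 - c * h2

end F2D
namespace F2D
open Finset

def insl {α : Type*} (l : List α) (x : α) (j : ℕ) : List α :=
  l.take j ++ x :: l.drop j

variable {α β : Type*}

lemma insl_length (l : List α) (x : α) (j : ℕ) (hj : j ≤ l.length) :
    (insl l x j).length = l.length + 1 := by
  simp [insl]; omega

lemma length_take_eq (l : List α) {j : ℕ} (hj : j ≤ l.length) :
    (l.take j).length = j := by simp; omega

lemma insl_getD_lt (l : List α) (x : α) {i j : ℕ} (d : α) (h : i < j) (hj : j ≤ l.length) :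
    (insl l x j).getD i d = l.getD i d := by
  rw [insl, List.getD_eq_getElem?_getD, List.getD_eq_getElem?_getD,
    List.getElem?_append, if_pos (by rw [length_take_eq l hj]; omega), List.getElem?_take,
    if_pos h]

lemma insl_getD_self (l : List α) (x : α) {j : ℕ} (d : α) (hj : j ≤ l.length) :
    (insl l x j).getD j d = x := by
  rw [insl, List.getD_eq_getElem?_getD, List.getElem?_append,
    if_neg (by rw [length_take_eq l hj]; omega), length_take_eq l hj]
  simp

lemma insl_getD_gt (l : List α) (x : α) {i j : ℕ} (d : α) (h : j < i) (hj : j ≤ l.length) :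
    (insl l x j).getD i d = l.getD (i - 1) d := by
  rw [insl, List.getD_eq_getElem?_getD, List.getD_eq_getElem?_getD,
    List.getElem?_append, if_neg (by rw [length_take_eq l hj]; omega), length_take_eq l hj,
    List.getElem?_cons, if_neg (by omega), List.getElem?_drop]
  have e : j + (i - j - 1) = i - 1 := by omega
  rw [e]

lemma mem_insl {l : List α} {x y : α} {j : ℕ} :
    y ∈ insl l x j ↔ y = x ∨ y ∈ l := by
  constructor
  · intro h
    rcases List.mem_append.1 h with h | h
    · exact Or.inr (List.mem_of_mem_take h)
    · rcases List.mem_cons.1 h with h | h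
      · exact Or.inl h
      · exact Or.inr (List.mem_of_mem_drop h)
  · intro h
    rcases h with h | h
    · subst h; exact List.mem_append.2 (Or.inr List.mem_cons_self)
    · conv at h => rw [← List.take_append_drop j l]
      rcases List.mem_append.1 h with h | h
      · exact List.mem_append.2 (Or.inl h)
      · exact List.mem_append.2 (Or.inr (List.mem_cons_of_mem _ h))

lemma map_insl (f : α → β) (l : List α) (x : α) (j : ℕ) :
    (insl l x j).map f = insl (l.map f) (f x) j := by
  simp [insl, List.map_take, List.map_drop]

lemma nodup_insl {l : List α} {x : α} {j : ℕ} (hx : x ∉ l) (hl : l.Nodup) :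
    (insl l x j).Nodup := by
  have h := hl
  conv at h => rw [← List.take_append_drop j l]
  rw [List.nodup_append] at h
  rw [insl, List.nodup_append]
  refine ⟨h.1, ?_, ?_⟩
  · rw [List.nodup_cons]
    exact ⟨fun hc => hx (List.mem_of_mem_drop hc), h.2.1⟩
  · intro y hy z hz
    rcases List.mem_cons.1 hz with h' | h'
    · exact fun e => hx (by rw [← h', ← e]; exact List.mem_of_mem_take hy)
    · exact h.2.2 y hy z h'

lemma prod_map_insl {M : Type*} [CommMonoid M] (f : α → M) (l : List α) (x : α) (j : ℕ) :
    ((insl l x j).map f).prod = f x * (l.map f).prod := by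
  rw [insl, List.map_append, List.prod_append, List.map_cons, List.prod_cons,
    mul_left_comm, ← List.prod_append, ← List.map_append, List.take_append_drop]

lemma alphaD_insl (d : ℕ → ℕ) (a : CPerm) (p : ℕ × ℕ) (j : ℕ) :
    alphaD d (insl a p j) =
      (if p.2 ≠ 0 then -XX ^ (-(d p.1 : ℤ)) else (1 : K)) * alphaD d a := by
  rw [alphaD, alphaD, prod_map_insl]

end F2D
namespace F2D
set_option linter.unusedSectionVars false
open Finset

lemma mem_DesSet {a : CPerm} {i : ℕ} :
    i ∈ DesSet a ↔ i < a.length ∧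
      (if i = 0 then (a.getD 0 (0, 0)).2 ≠ 0
       else cLt (a.getD i (0, 0)) (a.getD (i - 1) (0, 0))) := by
  simp [DesSet, Finset.mem_filter, Finset.mem_range]

lemma DesSet_subset_range (a : CPerm) : DesSet a ⊆ Finset.range a.length :=
  Finset.filter_subset _ _

/-- The common shifted part of the descent set of an insertion. -/
def shiftD (D : Finset ℕ) (j : ℕ) : Finset ℕ :=
  D.filter (· < j) ∪ (D.filter (j < ·)).image (· + 1)

lemma mem_shiftD {D : Finset ℕ} {j i : ℕ} :
    i ∈ shiftD D j ↔ (i ∈ D ∧ i < j) ∨ (i - 1 ∈ D ∧ j < i - 1 ∧ j + 2 ≤ i) := by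
  simp only [shiftD, Finset.mem_union, Finset.mem_filter, Finset.mem_image]
  constructor
  · rintro (⟨h1, h2⟩ | ⟨i', ⟨h1, h2⟩, rfl⟩)
    · exact Or.inl ⟨h1, h2⟩
    · right
      refine ⟨by simpa using h1, by omega, by omega⟩
  · rintro (⟨h1, h2⟩ | ⟨h1, h2, h3⟩)
    · exact Or.inl ⟨h1, h2⟩
    · right
      exact ⟨i - 1, ⟨h1, h2⟩, by omega⟩

section InsDes

variable {n : ℕ} {a : CPerm} (ha : a.length = n)

section Plain

variable (x : ℕ × ℕ) {j : ℕ} (hj : j ≤ n)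
include ha hj

lemma insl_length' : (insl a x j).length = n + 1 := by
  rw [insl_length _ _ _ (by omega), ha]

lemma insl_mem_DesSet_lt {i : ℕ} (hi : i < j) :
    i ∈ DesSet (insl a x j) ↔ i ∈ DesSet a := by
  rw [mem_DesSet, mem_DesSet, ha, insl_length' ha x hj]
  have hj' : j ≤ a.length := by omega
  rcases Nat.eq_zero_or_pos i with hz | hz
  · subst hz
    have e1 : (insl a x j).getD 0 (0,0) = a.getD 0 (0,0) := insl_getD_lt _ _ _ hi hj'
    rw [if_pos rfl, if_pos rfl, e1]
    constructor
    · rintro ⟨_, h⟩; exact ⟨by omega, h⟩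
    · rintro ⟨_, h⟩; exact ⟨by omega, h⟩
  · have e1 : (insl a x j).getD i (0,0) = a.getD i (0,0) := insl_getD_lt _ _ _ hi hj'
    have e2 : (insl a x j).getD (i-1) (0,0) = a.getD (i-1) (0,0) :=
      insl_getD_lt _ _ _ (by omega) hj'
    rw [if_neg (by omega), if_neg (by omega), e1, e2]
    constructor
    · rintro ⟨_, h⟩; exact ⟨by omega, h⟩
    · rintro ⟨_, h⟩; exact ⟨by omega, h⟩

lemma insl_mem_DesSet_ge2 {i : ℕ} (hi : j + 2 ≤ i) :
    i ∈ DesSet (insl a x j) ↔ i ≤ n ∧ i - 1 ∈ DesSet a := by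
  rw [mem_DesSet, mem_DesSet, ha, insl_length' ha x hj]
  have hj' : j ≤ a.length := by omega
  have e1 : (insl a x j).getD i (0,0) = a.getD (i-1) (0,0) :=
    insl_getD_gt _ _ _ (by omega) hj'
  have e2 : (insl a x j).getD (i-1) (0,0) = a.getD (i-1-1) (0,0) :=
    insl_getD_gt _ _ _ (by omega) hj'
  rw [if_neg (by omega), if_neg (by omega), e1, e2]
  constructor
  · rintro ⟨h1, h2⟩; exact ⟨by omega, by omega, h2⟩
  · rintro ⟨h1, h2, h3⟩; exact ⟨by omega, h3⟩

end Plain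

variable (hent : ∀ p ∈ a, 1 ≤ p.1 ∧ p.1 ≤ n ∧ (p.2 = 0 ∨ p.2 = p.1))
include ha hent

lemma entry_mem (i : ℕ) (hi : i < n) : a.getD i (0, 0) ∈ a := by
  rw [List.getD_eq_getElem _ _ (by omega)]
  exact List.getElem_mem _

lemma not_cLt_max (i : ℕ) (hi : i < n) : ¬ cLt ((n + 1 : ℕ), (0 : ℕ)) (a.getD i (0, 0)) := by
  have h := hent _ (entry_mem ha hent i hi)
  rw [cLt]
  push_neg
  refine ⟨by omega, fun h2 => ?_⟩
  simp only at h2 ⊢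
  omega

lemma cLt_of_max (i : ℕ) (hi : i < n) : cLt (a.getD i (0, 0)) ((n + 1 : ℕ), (0 : ℕ)) := by
  have h := hent _ (entry_mem ha hent i hi)
  rw [cLt]
  rcases Nat.eq_zero_or_pos (a.getD i (0, 0)).2 with h2 | h2
  · right; exact ⟨h2, by simp only; omega⟩
  · left; exact h2

lemma cLt_min (i : ℕ) (hi : i < n) : cLt ((n + 1 : ℕ), (n + 1 : ℕ)) (a.getD i (0, 0)) := by
  have h := hent _ (entry_mem ha hent i hi)
  rw [cLt]
  left
  simp only
  omega

lemma not_cLt_min (i : ℕ) (hi : i < n) :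
    ¬ cLt (a.getD i (0, 0)) ((n + 1 : ℕ), (n + 1 : ℕ)) := by
  have h := hent _ (entry_mem ha hent i hi)
  rw [cLt]
  push_neg
  refine ⟨by simp only; omega, fun h2 => ?_⟩
  simp only at h2 ⊢
  omega

variable {j : ℕ} (hj : j ≤ n)
include hj

lemma ins0_self_not_mem : j ∉ DesSet (insl a ((n + 1 : ℕ), (0 : ℕ)) j) := by
  rw [mem_DesSet]
  rintro ⟨hl, hP⟩
  have hj' : j ≤ a.length := by omega
  rcases Nat.eq_zero_or_pos j with hz | hz
  · subst hz
    rw [if_pos rfl, insl_getD_self _ _ _ hj'] at hP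
    exact hP rfl
  · rw [if_neg (by omega), insl_getD_self _ _ _ hj',
      insl_getD_lt _ _ _ (by omega) hj'] at hP
    exact not_cLt_max ha hent (j-1) (by omega) hP

lemma ins0_succ_mem : j + 1 ∈ DesSet (insl a ((n + 1 : ℕ), (0 : ℕ)) j) ↔ j < n := by
  rw [mem_DesSet, insl_length' ha _ hj]
  have hj' : j ≤ a.length := by omega
  constructor
  · rintro ⟨hl, _⟩; omega
  · intro h
    refine ⟨by omega, ?_⟩
    rw [if_neg (by omega)]
    have e : j + 1 - 1 = j := by omega
    rw [e, insl_getD_self _ _ _ hj', insl_getD_gt _ _ _ (by omega) hj']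
    have e2 : j + 1 - 1 = j := by omega
    rw [e2]
    exact cLt_of_max ha hent j (by omega)

lemma ins1_self_mem : j ∈ DesSet (insl a ((n + 1 : ℕ), (n + 1 : ℕ)) j) := by
  rw [mem_DesSet, insl_length' ha _ hj]
  have hj' : j ≤ a.length := by omega
  refine ⟨by omega, ?_⟩
  rcases Nat.eq_zero_or_pos j with hz | hz
  · rw [if_pos hz, hz, insl_getD_self _ _ _ (by omega)]
    simp
  · rw [if_neg (by omega), insl_getD_self _ _ _ hj',
      insl_getD_lt _ _ _ (by omega) hj']
    exact cLt_min ha hent (j-1) (by omega)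

lemma ins1_succ_not_mem : j + 1 ∉ DesSet (insl a ((n + 1 : ℕ), (n + 1 : ℕ)) j) := by
  rw [mem_DesSet]
  rintro ⟨hl, hP⟩
  rw [insl_length' ha _ hj] at hl
  have hj' : j ≤ a.length := by omega
  rw [if_neg (by omega)] at hP
  have e : j + 1 - 1 = j := by omega
  rw [e, insl_getD_self _ _ _ hj', insl_getD_gt _ _ _ (by omega) hj', e] at hP
  exact not_cLt_min ha hent j (by omega) hP

lemma DesSet_ins0 :
    DesSet (insl a ((n + 1 : ℕ), (0 : ℕ)) j) =
      shiftD (DesSet a) j ∪ (if j < n then {j + 1} else ∅) := by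
  have hD := DesSet_subset_range a
  rw [ha] at hD
  ext i
  rw [Finset.mem_union, mem_shiftD]
  have hsing : (i ∈ (if j < n then ({j + 1} : Finset ℕ) else ∅)) ↔ (j < n ∧ i = j + 1) := by
    split_ifs with h <;> simp [h]
  rw [hsing]
  rcases Nat.lt_trichotomy i j with hij | hij | hij
  · rw [insl_mem_DesSet_lt ha _ hj hij]
    constructor
    · intro h; exact Or.inl (Or.inl ⟨h, hij⟩)
    · rintro ((⟨h, _⟩ | ⟨_, h2, h3⟩) | ⟨_, h2⟩)
      · exact h
      · omega
      · omega
  · subst hij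
    constructor
    · intro h; exact absurd h (ins0_self_not_mem ha hent hj)
    · rintro ((⟨h, hc⟩ | ⟨h, hc, hc2⟩) | ⟨_, hc⟩) <;> omega
  · rcases Nat.lt_or_ge i (j + 2) with hi2 | hi2
    · have he : i = j + 1 := by omega
      subst he
      rw [ins0_succ_mem ha hent hj]
      constructor
      · intro h; exact Or.inr ⟨h, rfl⟩
      · rintro ((⟨h, hc⟩ | ⟨h, hc, hc2⟩) | ⟨h, _⟩) <;> omega
    · rw [insl_mem_DesSet_ge2 ha _ hj hi2]
      constructor
      · rintro ⟨h1, h2⟩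
        exact Or.inl (Or.inr ⟨h2, by omega, by omega⟩)
      · rintro ((⟨h, hc⟩ | ⟨h, hc, hc2⟩) | ⟨_, hc⟩)
        · omega
        · refine ⟨?_, h⟩
          have := hD h
          rw [Finset.mem_range] at this
          omega
        · omega

lemma DesSet_ins1 :
    DesSet (insl a ((n + 1 : ℕ), (n + 1 : ℕ)) j) = shiftD (DesSet a) j ∪ {j} := by
  have hD := DesSet_subset_range a
  rw [ha] at hD
  ext i
  rw [Finset.mem_union, mem_shiftD, Finset.mem_singleton]
  rcases Nat.lt_trichotomy i j with hij | hij | hij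
  · rw [insl_mem_DesSet_lt ha _ hj hij]
    constructor
    · intro h; exact Or.inl (Or.inl ⟨h, hij⟩)
    · rintro ((⟨h, _⟩ | ⟨_, h2, h3⟩) | h)
      · exact h
      · omega
      · omega
  · subst hij
    constructor
    · intro _; exact Or.inr rfl
    · intro _; exact ins1_self_mem ha hent hj
  · rcases Nat.lt_or_ge i (j + 2) with hi2 | hi2
    · have he : i = j + 1 := by omega
      subst he
      constructor
      · intro h; exact absurd h (ins1_succ_not_mem ha hent hj)
      · rintro ((⟨h, hc⟩ | ⟨h, hc, hc2⟩) | hc) <;> omega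
    · rw [insl_mem_DesSet_ge2 ha _ hj hi2]
      constructor
      · rintro ⟨h1, h2⟩
        exact Or.inl (Or.inr ⟨h2, by omega, by omega⟩)
      · rintro ((⟨h, hc⟩ | ⟨h, hc, hc2⟩) | hc)
        · omega
        · refine ⟨?_, h⟩
          have := hD h
          rw [Finset.mem_range] at this
          omega
        · omega

end InsDes
end F2D
namespace F2D
set_option linter.unusedSectionVars false
open Finset

def dlt (D : Finset ℕ) (j : ℕ) : ℕ := (D.filter (· < j)).card

def cgt (D : Finset ℕ) (j : ℕ) : ℕ := (D.filter (j < ·)).card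

def phiF (n : ℕ) (D : Finset ℕ) (j : ℕ) : ℕ :=
  if j ∈ D ∨ j = n then dlt D j else dlt D j + (n - j)

lemma tripart_card (D : Finset ℕ) (j : ℕ) :
    D.card = dlt D j + (if j ∈ D then 1 else 0) + cgt D j := by
  classical
  have h1 : (D.filter (· < j)).card + (D.filter (fun x => ¬ x < j)).card = D.card :=
    Finset.card_filter_add_card_filter_not _
  have h2 : ((D.filter (fun x => ¬ x < j)).filter (j < ·)).card +
      ((D.filter (fun x => ¬ x < j)).filter (fun x => ¬ j < x)).card =
      (D.filter (fun x => ¬ x < j)).card :=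
    Finset.card_filter_add_card_filter_not _
  have e1 : (D.filter (fun x => ¬ x < j)).filter (j < ·) = D.filter (j < ·) := by
    rw [Finset.filter_filter]
    exact Finset.filter_congr fun x _ => by constructor <;> intro h <;> simp_all <;> omega
  have e2 : (D.filter (fun x => ¬ x < j)).filter (fun x => ¬ j < x) = D.filter (· = j) := by
    rw [Finset.filter_filter]
    exact Finset.filter_congr fun x _ => by constructor <;> intro h <;> simp_all <;> omega
  have e3 : (D.filter (· = j)).card = if j ∈ D then 1 else 0 := by
    rw [Finset.filter_eq']
    split_ifs <;> simp
  rw [e1, e2, e3] at h2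
  unfold dlt cgt
  omega

lemma tripart_sum (D : Finset ℕ) (j : ℕ) (f : ℕ → ℕ) :
    ∑ i ∈ D, f i =
      (∑ i ∈ D.filter (· < j), f i) + (if j ∈ D then f j else 0) +
        ∑ i ∈ D.filter (j < ·), f i := by
  classical
  have h1 := Finset.sum_filter_add_sum_filter_not D (· < j) f
  have h2 := Finset.sum_filter_add_sum_filter_not (D.filter (fun x => ¬ x < j)) (j < ·) f
  have e1 : (D.filter (fun x => ¬ x < j)).filter (j < ·) = D.filter (j < ·) := by
    rw [Finset.filter_filter]
    exact Finset.filter_congr fun x _ => by constructor <;> intro h <;> simp_all <;> omega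
  have e2 : (D.filter (fun x => ¬ x < j)).filter (fun x => ¬ j < x) = D.filter (· = j) := by
    rw [Finset.filter_filter]
    exact Finset.filter_congr fun x _ => by constructor <;> intro h <;> simp_all <;> omega
  have e3 : ∑ i ∈ D.filter (· = j), f i = if j ∈ D then f j else 0 := by
    rw [Finset.filter_eq']
    split_ifs <;> simp
  rw [e1, e2, e3] at h2
  omega

lemma shiftD_card (D : Finset ℕ) (j : ℕ) :
    (shiftD D j).card = dlt D j + cgt D j := by
  rw [shiftD, Finset.card_union_of_disjoint, Finset.card_image_of_injective _
    (add_left_injective 1)]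
  · rfl
  · rw [Finset.disjoint_left]
    rintro x hx hx2
    rw [Finset.mem_filter] at hx
    rw [Finset.mem_image] at hx2
    obtain ⟨y, hy, rfl⟩ := hx2
    rw [Finset.mem_filter] at hy
    omega

lemma shiftD_sum (n : ℕ) (D : Finset ℕ) (hD : D ⊆ Finset.range n) (j : ℕ) :
    ∑ i ∈ shiftD D j, (n + 1 - i) =
      (∑ i ∈ D.filter (· < j), (n - i)) + dlt D j + ∑ i ∈ D.filter (j < ·), (n - i) := by
  rw [shiftD, Finset.sum_union, Finset.sum_image]
  · have h1 : ∑ i ∈ D.filter (· < j), (n + 1 - i) =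
        (∑ i ∈ D.filter (· < j), (n - i)) + dlt D j := by
      rw [dlt, Finset.card_eq_sum_ones, ← Finset.sum_add_distrib]
      refine Finset.sum_congr rfl fun i hi => ?_
      rw [Finset.mem_filter] at hi
      have := hD hi.1
      rw [Finset.mem_range] at this
      omega
    have h2 : ∑ i ∈ D.filter (j < ·), (n + 1 - (i + 1)) = ∑ i ∈ D.filter (j < ·), (n - i) :=
      Finset.sum_congr rfl fun i _ => by omega
    rw [h1, h2]
  · intro x _ y _ h
    exact Nat.succ_injective h
  · rw [Finset.disjoint_left]
    rintro x hx hx2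
    rw [Finset.mem_filter] at hx
    rw [Finset.mem_image] at hx2
    obtain ⟨y, hy, rfl⟩ := hx2
    rw [Finset.mem_filter] at hy
    omega

section InsDesComaj

variable {n : ℕ} {a : CPerm} (ha : a.length = n)
  (hent : ∀ p ∈ a, 1 ≤ p.1 ∧ p.1 ≤ n ∧ (p.2 = 0 ∨ p.2 = p.1))
  {j : ℕ} (hj : j ≤ n)
include ha hent hj

lemma mem_D_lt {i : ℕ} (h : i ∈ DesSet a) : i < n := by
  have := DesSet_subset_range a h
  rw [Finset.mem_range, ha] at this
  exact this

lemma des_ins0 :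
    des (insl a ((n + 1 : ℕ), (0 : ℕ)) j) =
      if j ∈ DesSet a ∨ j = n then des a else des a + 1 := by
  rw [des, des, DesSet_ins0 ha hent hj]
  rw [Finset.card_union_of_disjoint]
  · rw [shiftD_card]
    have ht := tripart_card (DesSet a) j
    have hsc : (if j < n then ({j+1} : Finset ℕ) else ∅).card = if j < n then 1 else 0 := by
      split_ifs <;> simp
    rw [hsc]
    by_cases hjd : j ∈ DesSet a
    · have hlt : j < n := mem_D_lt ha hent hj hjd
      rw [if_pos hjd] at ht
      rw [if_pos (Or.inl hjd), if_pos hlt]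
      omega
    · rw [if_neg hjd] at ht
      by_cases hjn : j = n
      · rw [if_pos (Or.inr hjn), if_neg (by omega : ¬ j < n)]
        omega
      · rw [if_neg (not_or.mpr ⟨hjd, hjn⟩), if_pos (by omega)]
        omega
  · rw [Finset.disjoint_left]
    intro x hx hx2
    rw [mem_shiftD] at hx
    split_ifs at hx2 with h
    · rw [Finset.mem_singleton] at hx2
      omega
    · exact absurd hx2 (Finset.notMem_empty x)

lemma des_ins1 :
    des (insl a ((n + 1 : ℕ), (n + 1 : ℕ)) j) =
      if j ∈ DesSet a then des a else des a + 1 := by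
  rw [des, des, DesSet_ins1 ha hent hj]
  rw [Finset.card_union_of_disjoint]
  · rw [shiftD_card, Finset.card_singleton]
    have ht := tripart_card (DesSet a) j
    by_cases hjd : j ∈ DesSet a
    · rw [if_pos hjd] at ht ⊢
      omega
    · rw [if_neg hjd] at ht ⊢
      omega
  · rw [Finset.disjoint_left]
    intro x hx hx2
    rw [mem_shiftD] at hx
    rw [Finset.mem_singleton] at hx2
    omega

lemma comaj_ins0 :
    comaj (insl a ((n + 1 : ℕ), (0 : ℕ)) j) = comaj a + phiF n (DesSet a) j := by
  have hD : DesSet a ⊆ Finset.range n := by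
    rw [← ha]; exact DesSet_subset_range a
  rw [comaj, comaj, insl_length' ha _ hj, ha, DesSet_ins0 ha hent hj]
  rw [Finset.sum_union]
  · rw [shiftD_sum n _ hD]
    have hts := tripart_sum (DesSet a) j (fun i => n - i)
    have hsing : ∑ i ∈ (if j < n then ({j+1} : Finset ℕ) else ∅), (n + 1 - i) =
        if j < n then n - j else 0 := by
      split_ifs with h
      · rw [Finset.sum_singleton]; omega
      · simp
    rw [hsing, phiF]
    by_cases hjd : j ∈ DesSet a
    · have hlt : j < n := mem_D_lt ha hent hj hjd
      rw [if_pos hjd] at hts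
      rw [if_pos (Or.inl hjd), if_pos hlt, hts]
      omega
    · rw [if_neg hjd] at hts
      by_cases hjn : j = n
      · rw [if_pos (Or.inr hjn), if_neg (by omega : ¬ j < n), hts]
        omega
      · rw [if_neg (not_or.mpr ⟨hjd, hjn⟩), if_pos (by omega), hts]
        omega
  · rw [Finset.disjoint_left]
    intro x hx hx2
    rw [mem_shiftD] at hx
    split_ifs at hx2 with h
    · rw [Finset.mem_singleton] at hx2
      omega
    · exact absurd hx2 (Finset.notMem_empty x)

lemma comaj_ins1 :
    comaj (insl a ((n + 1 : ℕ), (n + 1 : ℕ)) j) = comaj a + phiF n (DesSet a) j + 1 := by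
  have hD : DesSet a ⊆ Finset.range n := by
    rw [← ha]; exact DesSet_subset_range a
  rw [comaj, comaj, insl_length' ha _ hj, ha, DesSet_ins1 ha hent hj]
  rw [Finset.sum_union]
  · rw [shiftD_sum n _ hD]
    have hts := tripart_sum (DesSet a) j (fun i => n - i)
    rw [Finset.sum_singleton, phiF]
    by_cases hjd : j ∈ DesSet a
    · have hlt : j < n := mem_D_lt ha hent hj hjd
      rw [if_pos hjd] at hts
      rw [if_pos (Or.inl hjd), hts]
      omega
    · rw [if_neg hjd] at hts
      by_cases hjn : j = n
      · rw [if_pos (Or.inr hjn), hts]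
        omega
      · rw [if_neg (not_or.mpr ⟨hjd, hjn⟩), hts]
        omega
  · rw [Finset.disjoint_left]
    intro x hx hx2
    rw [mem_shiftD] at hx
    rw [Finset.mem_singleton] at hx2
    omega

end InsDesComaj
end F2D
namespace F2D
set_option linter.unusedSectionVars false
open Finset

section Phi

variable {n : ℕ} {D : Finset ℕ} (hD : D ⊆ Finset.range n)

lemma dlt_mono {i j : ℕ} (hij : i < j) (hi : i ∈ D) : dlt D i < dlt D j := by
  apply Finset.card_lt_card
  constructor
  · intro x hx
    rw [Finset.mem_filter] at hx ⊢
    exact ⟨hx.1, by omega⟩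
  · intro hsub
    have : i ∈ D.filter (· < j) := Finset.mem_filter.2 ⟨hi, hij⟩
    have := hsub this
    rw [Finset.mem_filter] at this
    omega

lemma dlt_lt_card {j : ℕ} (hj : j ∈ D) : dlt D j < D.card := by
  apply Finset.card_lt_card
  constructor
  · exact Finset.filter_subset _ _
  · intro hsub
    have := hsub hj
    rw [Finset.mem_filter] at this
    omega

include hD

lemma dlt_top : dlt D n = D.card := by
  unfold dlt
  congr 1
  refine Finset.filter_true_of_mem fun x hx => ?_
  have := hD hx
  rw [Finset.mem_range] at this
  exact this

lemma dlt_le_self (j : ℕ) : dlt D j ≤ j := by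
  have : D.filter (· < j) ⊆ Finset.range j := by
    intro x hx
    rw [Finset.mem_filter] at hx
    rw [Finset.mem_range]
    exact hx.2
  have := Finset.card_le_card this
  rwa [Finset.card_range] at this

lemma cgt_bound {j : ℕ} (hj : j ∉ D) (hjn : j < n) : cgt D j ≤ n - j - 1 := by
  have hsub : D.filter (j < ·) ⊆ Finset.Ico (j + 1) n := by
    intro x hx
    rw [Finset.mem_filter] at hx
    rw [Finset.mem_Ico]
    have hx2 := hD hx.1
    rw [Finset.mem_range] at hx2
    have : x ≠ j := fun h => hj (h ▸ hx.1)
    omega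
  have := Finset.card_le_card hsub
  rw [Nat.card_Ico] at this
  unfold cgt
  omega

lemma dlt_gap {j j' : ℕ} (hj : j ∉ D) (hjj : j < j') : dlt D j' ≤ dlt D j + (j' - j - 1) := by
  have hsub : D.filter (· < j') ⊆ D.filter (· < j) ∪ Finset.Ico (j + 1) j' := by
    intro x hx
    rw [Finset.mem_filter] at hx
    rw [Finset.mem_union, Finset.mem_filter, Finset.mem_Ico]
    have : x ≠ j := fun h => hj (h ▸ hx.1)
    rcases Nat.lt_or_ge x j with h | h
    · exact Or.inl ⟨hx.1, h⟩
    · exact Or.inr ⟨by omega, hx.2⟩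
  have h1 := Finset.card_le_card hsub
  have h2 := Finset.card_union_le (D.filter (· < j)) (Finset.Ico (j + 1) j')
  rw [Nat.card_Ico] at h2
  unfold dlt
  omega

lemma phiF_mem_lt {j : ℕ} (hj : j ∈ D) : phiF n D j < D.card := by
  rw [phiF, if_pos (Or.inl hj)]
  exact dlt_lt_card hj

lemma phiF_top : phiF n D n = D.card := by
  have hn : n ∉ D := fun h => by
    have := hD h
    rw [Finset.mem_range] at this
    omega
  rw [phiF, if_pos (Or.inr rfl)]
  exact dlt_top hD

lemma phiF_not_mem_gt {j : ℕ} (hj : j ∉ D) (hjn : j < n) : D.card < phiF n D j := by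
  rw [phiF, if_neg (not_or.mpr ⟨hj, by omega⟩)]
  have h1 := tripart_card D j
  rw [if_neg hj] at h1
  have h2 := cgt_bound hD hj hjn
  omega

lemma phiF_le_n {j : ℕ} (hj : j ≤ n) : phiF n D j ≤ n := by
  rw [phiF]
  split_ifs with h
  · rcases h with h | h
    · have h1 := dlt_lt_card h
      have h2 : D.card ≤ n := by
        have := Finset.card_le_card hD
        rwa [Finset.card_range] at this
      omega
    · subst h
      rw [dlt_top hD]
      have := Finset.card_le_card hD
      rwa [Finset.card_range] at this
  · have := dlt_le_self hD j
    omega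

lemma phiF_injOn : Set.InjOn (phiF n D) (Finset.range (n + 1)) := by
  have key : ∀ j j', j < j' → j' ≤ n → phiF n D j ≠ phiF n D j' := by
    intro j j' hjj hj'
    by_cases hjD : j ∈ D
    · have h1 : phiF n D j = dlt D j := by rw [phiF, if_pos (Or.inl hjD)]
      by_cases hP : j' ∈ D ∨ j' = n
      · have h2 : phiF n D j' = dlt D j' := by rw [phiF, if_pos hP]
        rcases hP with hP | hP
        · have := dlt_mono hjj hjD
          omega
        · subst hP
          rw [dlt_top hD] at h2
          have := dlt_lt_card hjD
          omega
      · push_neg at hP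
        have h2 := phiF_not_mem_gt hD hP.1 (by omega)
        have h3 := dlt_lt_card hjD
        omega
    · have hjn : j < n := by omega
      have h1 := phiF_not_mem_gt hD hjD hjn
      by_cases hP : j' ∈ D ∨ j' = n
      · have h2 : phiF n D j' ≤ D.card := by
          rcases hP with hP | hP
          · exact le_of_lt (phiF_mem_lt hD hP)
          · subst hP; rw [phiF_top hD]
        omega
      · push_neg at hP
        have e1 : phiF n D j = dlt D j + (n - j) := by
          rw [phiF, if_neg (not_or.mpr ⟨hjD, by omega⟩)]
        have e2 : phiF n D j' = dlt D j' + (n - j') := by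
          rw [phiF, if_neg (not_or.mpr ⟨hP.1, hP.2⟩)]
        have h3 := dlt_gap hD hjD hjj
        omega
  intro j hj j' hj' heq
  rw [Finset.coe_range, Set.mem_Iio] at hj hj'
  by_contra hne
  rcases Nat.lt_or_ge j j' with h | h
  · exact key j j' h (by omega) heq
  · exact key j' j (by omega) (by omega) heq.symm

lemma phiF_image : (Finset.range (n + 1)).image (phiF n D) = Finset.range (n + 1) := by
  apply Finset.eq_of_subset_of_card_le
  · intro x hx
    rw [Finset.mem_image] at hx
    obtain ⟨j, hj, rfl⟩ := hx
    rw [Finset.mem_range] at hj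
    rw [Finset.mem_range]
    have := phiF_le_n hD (j := j) (by omega)
    omega
  · rw [Finset.card_image_of_injOn (phiF_injOn hD), Finset.card_range]

lemma sum_phiF {M : Type*} [AddCommMonoid M] (F : ℕ → M) :
    ∑ j ∈ Finset.range (n + 1), F (phiF n D j) = ∑ r ∈ Finset.range (n + 1), F r := by
  conv_rhs => rw [← phiF_image hD]
  rw [Finset.sum_image (fun x hx y hy h => phiF_injOn hD (by simpa using hx) (by simpa using hy) h)]

lemma phiF_le_iff {j : ℕ} (hj : j ≤ n) : (j ∈ D ∨ j = n) ↔ phiF n D j ≤ D.card := by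
  constructor
  · rintro (h | h)
    · exact le_of_lt (phiF_mem_lt hD h)
    · subst h; rw [phiF_top hD]
  · intro h
    by_contra hc
    push_neg at hc
    have := phiF_not_mem_gt hD hc.1 (by omega)
    omega

lemma phiF_lt_iff {j : ℕ} (hj : j ≤ n) : j ∈ D ↔ phiF n D j < D.card := by
  constructor
  · exact phiF_mem_lt hD
  · intro h
    by_contra hc
    by_cases hn : j = n
    · subst hn; rw [phiF_top hD] at h; omega
    · have := phiF_not_mem_gt hD hc (by omega)
      omega

end Phi
end F2D
namespace F2D
set_option linter.unusedSectionVars false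
open PowerSeries Finset

/-- All insertions of the new maximal symbol `n+1` (with colour `0` or `n+1`). -/
def insertions (n : ℕ) (a : CPerm) : Multiset CPerm :=
  (Finset.range (n + 1)).val.map (fun j => insl a ((n + 1 : ℕ), (0 : ℕ)) j) +
  (Finset.range (n + 1)).val.map (fun j => insl a ((n + 1 : ℕ), (n + 1 : ℕ)) j)

def Tfun (d : ℕ → ℕ) (b : CPerm) : PowerSeries K :=
  PowerSeries.C (R := K) (alphaD d b * XX ^ (comaj b : ℤ)) * PowerSeries.X ^ des b

lemma XX_ne_zero : (XX : K) ≠ 0 := RatFunc.X_ne_zero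

lemma scalar1 (α : K) (m r dd : ℕ) :
    -XX ^ (-(dd : ℤ)) * α * XX ^ ((m + r + 1 : ℕ) : ℤ) =
      α * XX ^ (m : ℤ) * XX ^ (1 - (dd : ℤ)) * XX ^ r * (-1) := by
  have hX := XX_ne_zero
  rw [show ((m + r + 1 : ℕ) : ℤ) = (m : ℤ) + (r : ℤ) + 1 by push_cast; ring,
    zpow_add₀ hX, zpow_add₀ hX, zpow_natCast, zpow_natCast, zpow_one,
    show (1 - (dd : ℤ)) = -(dd : ℤ) + 1 by ring, zpow_add₀ hX, zpow_one]
  ring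

section PartSums

variable (d : ℕ → ℕ) {n : ℕ} {a : CPerm} (ha : a.length = n)
  (hent : ∀ p ∈ a, 1 ≤ p.1 ∧ p.1 ≤ n ∧ (p.2 = 0 ∨ p.2 = p.1))
include ha hent

lemma hD_of : DesSet a ⊆ Finset.range n := by
  rw [← ha]; exact DesSet_subset_range a

lemma des_le : des a ≤ n := by
  have := Finset.card_le_card (hD_of ha hent)
  rwa [Finset.card_range] at this

lemma part0_sum :
    ∑ j ∈ Finset.range (n + 1), Tfun d (insl a ((n + 1 : ℕ), (0 : ℕ)) j) =
      PowerSeries.C (R := K) (alphaD d a * XX ^ (comaj a : ℤ)) *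
        (PowerSeries.C (R := K) (sig (des a + 1)) * PowerSeries.X ^ des a +
          PowerSeries.C (R := K) (XX ^ (des a + 1) * sig (n - des a)) *
            PowerSeries.X ^ (des a + 1)) := by
  have hD := hD_of ha hent
  have hs := des_le ha hent
  have hX := XX_ne_zero
  set F0 : ℕ → PowerSeries K := fun r =>
    PowerSeries.C (R := K) (alphaD d a * XX ^ (comaj a : ℤ) * XX ^ r) *
      PowerSeries.X ^ (if r ≤ des a then des a else des a + 1) with hF0
  have step1 : ∑ j ∈ Finset.range (n + 1), Tfun d (insl a ((n + 1 : ℕ), (0 : ℕ)) j) =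
      ∑ j ∈ Finset.range (n + 1), F0 (phiF n (DesSet a) j) := by
    refine Finset.sum_congr rfl fun j hj => ?_
    rw [Finset.mem_range] at hj
    have hj' : j ≤ n := by omega
    rw [Tfun, alphaD_insl, comaj_ins0 ha hent hj', des_ins0 ha hent hj']
    rw [if_neg (by norm_num : ¬ ((n + 1 : ℕ), (0 : ℕ)).2 ≠ 0), one_mul]
    have hcast : ((comaj a + phiF n (DesSet a) j : ℕ) : ℤ) =
        (comaj a : ℤ) + ((phiF n (DesSet a) j : ℕ) : ℤ) := by push_cast; ring
    rw [hcast, zpow_add₀ hX, zpow_natCast, hF0]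
    simp only
    rw [← mul_assoc]
    congr 2
    rw [des]
    by_cases h : j ∈ DesSet a ∨ j = n
    · rw [if_pos h, if_pos ((phiF_le_iff hD hj').1 h)]
    · rw [if_neg h, if_neg (fun hc => h ((phiF_le_iff hD hj').2 hc))]
  rw [step1, sum_phiF hD]
  have hsplit : ∑ r ∈ Finset.range (n + 1), F0 r =
      (∑ r ∈ Finset.range (des a + 1),
        PowerSeries.C (R := K) (alphaD d a * XX ^ (comaj a : ℤ) * XX ^ r)) *
          PowerSeries.X ^ des a +
      (∑ r ∈ Finset.Ico (des a + 1) (n + 1),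
        PowerSeries.C (R := K) (alphaD d a * XX ^ (comaj a : ℤ) * XX ^ r)) *
          PowerSeries.X ^ (des a + 1) := by
    rw [Finset.range_eq_Ico,
      ← Finset.sum_Ico_consecutive _ (Nat.zero_le (des a + 1)) (by omega : des a + 1 ≤ n + 1),
      Finset.sum_mul, Finset.sum_mul]
    congr 1
    · rw [← Finset.range_eq_Ico]
      refine Finset.sum_congr rfl fun r hr => ?_
      rw [Finset.mem_range] at hr
      rw [hF0]
      simp only
      rw [if_pos (by omega)]
    · refine Finset.sum_congr rfl fun r hr => ?_
      rw [Finset.mem_Ico] at hr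
      rw [hF0]
      simp only
      rw [if_neg (by omega)]
  rw [hsplit]
  have e1 : ∑ r ∈ Finset.range (des a + 1),
      PowerSeries.C (R := K) (alphaD d a * XX ^ (comaj a : ℤ) * XX ^ r) =
      PowerSeries.C (R := K) (alphaD d a * XX ^ (comaj a : ℤ)) *
        PowerSeries.C (R := K) (sig (des a + 1)) := by
    rw [← map_mul, ← map_sum, ← Finset.mul_sum, sig]
  have e2 : ∑ r ∈ Finset.Ico (des a + 1) (n + 1),
      PowerSeries.C (R := K) (alphaD d a * XX ^ (comaj a : ℤ) * XX ^ r) =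
      PowerSeries.C (R := K) (alphaD d a * XX ^ (comaj a : ℤ)) *
        PowerSeries.C (R := K) (XX ^ (des a + 1) * sig (n - des a)) := by
    rw [← map_mul, ← map_sum, ← Finset.mul_sum]
    congr 2
    rw [sum_Ico_pow]
    congr 2
    omega
  rw [e1, e2]
  ring

lemma part1_sum :
    ∑ j ∈ Finset.range (n + 1), Tfun d (insl a ((n + 1 : ℕ), (n + 1 : ℕ)) j) =
      -(PowerSeries.C (R := K) (alphaD d a * XX ^ (comaj a : ℤ)) *
        (PowerSeries.C (R := K) (XX ^ (1 - (d (n + 1) : ℤ))) *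
          (PowerSeries.C (R := K) (sig (des a)) * PowerSeries.X ^ des a +
            PowerSeries.C (R := K) (XX ^ des a * sig (n + 1 - des a)) *
              PowerSeries.X ^ (des a + 1)))) := by
  have hD := hD_of ha hent
  have hs := des_le ha hent
  have hX := XX_ne_zero
  set β : K := alphaD d a * XX ^ (comaj a : ℤ) * XX ^ (1 - (d (n + 1) : ℤ)) with hβ
  set F1 : ℕ → PowerSeries K := fun r =>
    PowerSeries.C (R := K) (β * XX ^ r * (-1)) *
      PowerSeries.X ^ (if r < des a then des a else des a + 1) with hF1
  have step1 : ∑ j ∈ Finset.range (n + 1), Tfun d (insl a ((n + 1 : ℕ), (n + 1 : ℕ)) j) =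
      ∑ j ∈ Finset.range (n + 1), F1 (phiF n (DesSet a) j) := by
    refine Finset.sum_congr rfl fun j hj => ?_
    rw [Finset.mem_range] at hj
    have hj' : j ≤ n := by omega
    rw [Tfun, alphaD_insl, comaj_ins1 ha hent hj', des_ins1 ha hent hj']
    rw [if_pos (by norm_num : ((n + 1 : ℕ), (n + 1 : ℕ)).2 ≠ 0)]
    have hsc : -XX ^ (-(d ((n + 1 : ℕ), (n + 1 : ℕ)).1 : ℤ)) * alphaD d a *
        XX ^ ((comaj a + phiF n (DesSet a) j + 1 : ℕ) : ℤ) =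
        β * XX ^ (phiF n (DesSet a) j) * (-1) := by
      rw [hβ]
      exact scalar1 (alphaD d a) (comaj a) (phiF n (DesSet a) j) (d (n + 1))
    rw [hsc, hF1]
    simp only
    congr 2
    rw [des]
    by_cases h : j ∈ DesSet a
    · rw [if_pos h, if_pos ((phiF_lt_iff hD hj').1 h)]
    · rw [if_neg h, if_neg (fun hc => h ((phiF_lt_iff hD hj').2 hc))]
  rw [step1, sum_phiF hD]
  have hsplit : ∑ r ∈ Finset.range (n + 1), F1 r =
      (∑ r ∈ Finset.range (des a), PowerSeries.C (R := K) (β * XX ^ r * (-1))) *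
          PowerSeries.X ^ des a +
      (∑ r ∈ Finset.Ico (des a) (n + 1), PowerSeries.C (R := K) (β * XX ^ r * (-1))) *
          PowerSeries.X ^ (des a + 1) := by
    rw [Finset.range_eq_Ico,
      ← Finset.sum_Ico_consecutive _ (Nat.zero_le (des a)) (by omega : des a ≤ n + 1),
      Finset.sum_mul, Finset.sum_mul]
    congr 1
    · rw [← Finset.range_eq_Ico]
      refine Finset.sum_congr rfl fun r hr => ?_
      rw [Finset.mem_range] at hr
      rw [hF1]
      simp only
      rw [if_pos (by omega)]
    · refine Finset.sum_congr rfl fun r hr => ?_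
      rw [Finset.mem_Ico] at hr
      rw [hF1]
      simp only
      rw [if_neg (by omega)]
  rw [hsplit]
  have e1 : ∑ r ∈ Finset.range (des a), PowerSeries.C (R := K) (β * XX ^ r * (-1)) =
      PowerSeries.C (R := K) (β * sig (des a) * (-1)) := by
    rw [← map_sum]
    congr 1
    rw [sig, Finset.mul_sum, Finset.sum_mul]
  have e2 : ∑ r ∈ Finset.Ico (des a) (n + 1), PowerSeries.C (R := K) (β * XX ^ r * (-1)) =
      PowerSeries.C (R := K) (β * (XX ^ des a * sig (n + 1 - des a)) * (-1)) := by
    rw [← map_sum]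
    congr 1
    rw [← sum_Ico_pow, Finset.mul_sum, Finset.sum_mul]
  rw [e1, e2, hβ]
  simp only [map_mul, map_neg, map_one]
  ring

omit ha hent in
lemma msum_comp (N : ℕ) (f : ℕ → PowerSeries K) :
    (Multiset.map f (Finset.range N).val).sum = ∑ j ∈ Finset.range N, f j := rfl

lemma insertion_sum :
    ((insertions n a).map (Tfun d)).sum =
      PowerSeries.C (R := K) (alphaD d a * XX ^ (comaj a : ℤ)) *
        (PowerSeries.C (R := K) (sig (des a + 1)) * PowerSeries.X ^ des a +
          PowerSeries.C (R := K) (XX ^ (des a + 1) * sig (n - des a)) *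
            PowerSeries.X ^ (des a + 1) -
          PowerSeries.C (R := K) (XX ^ (1 - (d (n + 1) : ℤ))) *
            (PowerSeries.C (R := K) (sig (des a)) * PowerSeries.X ^ des a +
              PowerSeries.C (R := K) (XX ^ des a * sig (n + 1 - des a)) *
                PowerSeries.X ^ (des a + 1))) := by
  rw [insertions, Multiset.map_add, Multiset.sum_add, Multiset.map_map, Multiset.map_map,
    msum_comp, msum_comp]
  simp only [Function.comp_apply]
  rw [part0_sum d ha hent, part1_sum d ha hent]
  ring

end PartSums
end F2D
namespace F2D
set_option linter.unusedSectionVars false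
open Finset

lemma PiSn_length {N : ℕ} {a : CPerm} (h : a ∈ PiSn N) : a.length = N := by
  rw [PiSn, Multiset.mem_map] at h
  obtain ⟨sg, _, rfl⟩ := h
  simp

lemma PiSn_entries {N : ℕ} {a : CPerm} (h : a ∈ PiSn N) :
    ∀ p ∈ a, 1 ≤ p.1 ∧ p.1 ≤ N ∧ (p.2 = 0 ∨ p.2 = p.1) := by
  rw [PiSn, Multiset.mem_map] at h
  obtain ⟨sg, _, rfl⟩ := h
  intro p hp
  rw [List.mem_ofFn] at hp
  obtain ⟨i, rfl⟩ := hp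
  have hv : (sg.1 i : ℕ) < N := (sg.1 i).isLt
  simp only
  refine ⟨by omega, by omega, ?_⟩
  by_cases hb : sg.2 i
  · right; simp [hb]
  · left; simp [hb]

lemma PiSn_fst_nodup {N : ℕ} {a : CPerm} (h : a ∈ PiSn N) :
    (a.map Prod.fst).Nodup := by
  rw [PiSn, Multiset.mem_map] at h
  obtain ⟨sg, _, rfl⟩ := h
  rw [List.map_ofFn]
  rw [List.nodup_ofFn]
  intro i j hij
  simp only [Function.comp_apply] at hij
  have : sg.1 i = sg.1 j := by
    apply Fin.val_injective
    omega
  exact sg.1.injective this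

lemma mem_PiSn_of {N : ℕ} {a : CPerm} (hlen : a.length = N)
    (hnd : (a.map Prod.fst).Nodup)
    (hent : ∀ p ∈ a, 1 ≤ p.1 ∧ p.1 ≤ N ∧ (p.2 = 0 ∨ p.2 = p.1)) :
    a ∈ PiSn N := by
  classical
  have hgm : ∀ i : Fin N, a.getD (i : ℕ) (0, 0) ∈ a := by
    intro i
    rw [List.getD_eq_getElem _ _ (by omega)]
    exact List.getElem_mem _
  set f : Fin N → Fin N := fun i =>
    ⟨(a.getD (i : ℕ) (0, 0)).1 - 1, by
      have := hent _ (hgm i)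
      omega⟩ with hf
  have hinj : Function.Injective f := by
    intro i i' hii
    have e := congrArg Fin.val hii
    simp only [hf] at e
    have hmi := hent _ (hgm i)
    have hmi' := hent _ (hgm i')
    have h1 : (a.getD (i : ℕ) (0, 0)).1 = (a.getD (i' : ℕ) (0, 0)).1 := by omega
    have hN := List.nodup_iff_injective_get.1 hnd
    have h2 : (a.map Prod.fst).get ⟨(i : ℕ), by simp [hlen]⟩ =
        (a.map Prod.fst).get ⟨(i' : ℕ), by simp [hlen]⟩ := by
      simp only [List.get_eq_getElem, List.getElem_map]
      rw [← List.getD_eq_getElem a (0, 0) (by omega), ← List.getD_eq_getElem a (0, 0) (by omega)]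
      exact h1
    have := hN h2
    apply Fin.val_injective
    simpa using this
  have hbij : Function.Bijective f := (Finite.injective_iff_bijective).1 hinj
  set σ : Equiv.Perm (Fin N) := Equiv.ofBijective f hbij with hσ
  set g : Fin N → Bool := fun i => decide ((a.getD (i : ℕ) (0, 0)).2 ≠ 0) with hg
  rw [PiSn, Multiset.mem_map]
  refine ⟨(σ, g), (Finset.mem_univ _), ?_⟩
  apply List.ext_getElem
  · simp [hlen]
  · intro i h1 h2
    rw [List.getElem_ofFn]
    have hi : i < N := by simpa using h1
    have hilt : i < a.length := by omega
    rw [← List.getD_eq_getElem a (0, 0) hilt]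
    have hm := hent _ (hgm ⟨i, hi⟩)
    simp only [Fin.val_mk] at hm
    obtain ⟨hm1, hm2, hm3⟩ := hm
    have hσv : (σ ⟨i, hi⟩ : ℕ) = (a.getD i (0, 0)).1 - 1 := rfl
    apply Prod.ext
    · show (σ ⟨i, hi⟩ : ℕ) + 1 = (a.getD i (0, 0)).1
      rw [hσv]
      omega
    · show (if g ⟨i, hi⟩ then (σ ⟨i, hi⟩ : ℕ) + 1 else 0) = (a.getD i (0, 0)).2
      rcases hm3 with hm3 | hm3
      · have hgf : g ⟨i, hi⟩ = false := by
          rw [hg]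
          simpa using hm3
        rw [hgf]
        simp only [Bool.false_eq_true, if_false]
        exact hm3.symm
      · have hne : (a.getD i (0, 0)).2 ≠ 0 := by omega
        have hgt : g ⟨i, hi⟩ = true := by
          rw [hg]
          simpa using hne
        rw [hgt]
        simp only [if_true]
        rw [hσv]
        omega

lemma PiSn_nodup (N : ℕ) : (PiSn N).Nodup := by
  rw [PiSn]
  apply Multiset.Nodup.map
  · intro sg sg' h
    rw [List.ofFn_inj] at h
    have hfst : ∀ i, sg.1 i = sg'.1 i := by
      intro i
      have := congrArg Prod.fst (congrFun h i)
      simp only at this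
      apply Fin.val_injective
      omega
    have hsnd : ∀ i, sg.2 i = sg'.2 i := by
      intro i
      have h2 := congrArg Prod.snd (congrFun h i)
      simp only at h2
      have h1 := hfst i
      by_cases hb : sg.2 i <;> by_cases hb' : sg'.2 i <;>
        simp [hb, hb'] at h2 ⊢ <;> omega
    have : sg.1 = sg'.1 := Equiv.ext hfst
    exact Prod.ext this (funext hsnd)
  · exact Finset.univ.nodup

section Recover

variable {n : ℕ}

lemma recover_insl {a : CPerm} (hfst : ∀ p ∈ a, p.1 ≤ n) (p : ℕ × ℕ) (hp : p.1 = n + 1)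
    (j : ℕ) :
    (insl a p j).filter (fun q => q.1 ≠ n + 1) = a := by
  rw [insl, List.filter_append, List.filter_cons]
  rw [if_neg (by simp [hp])]
  have h1 : (a.take j).filter (fun q => q.1 ≠ n + 1) = a.take j := by
    rw [List.filter_eq_self]
    intro q hq
    have := hfst q (List.mem_of_mem_take hq)
    simp
    omega
  have h2 : (a.drop j).filter (fun q => q.1 ≠ n + 1) = a.drop j := by
    rw [List.filter_eq_self]
    intro q hq
    have := hfst q (List.mem_of_mem_drop hq)
    simp
    omega
  rw [h1, h2, List.take_append_drop]

lemma mem_insertions {a b : CPerm} (h : b ∈ insertions n a) :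
    ∃ j ≤ n, b = insl a ((n + 1 : ℕ), (0 : ℕ)) j ∨ b = insl a ((n + 1 : ℕ), (n + 1 : ℕ)) j := by
  rw [insertions, Multiset.mem_add] at h
  rcases h with h | h <;> rw [Multiset.mem_map] at h <;> obtain ⟨j, hj, rfl⟩ := h <;>
    rw [Finset.mem_val, Finset.mem_range] at hj
  · exact ⟨j, by omega, Or.inl rfl⟩
  · exact ⟨j, by omega, Or.inr rfl⟩

lemma insertions_mem_PiSn {a b : CPerm} (ha : a ∈ PiSn n) (h : b ∈ insertions n a) :
    b ∈ PiSn (n + 1) := by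
  obtain ⟨j, hj, hb⟩ := mem_insertions h
  have hlen := PiSn_length ha
  have hent := PiSn_entries ha
  have hnd := PiSn_fst_nodup ha
  have hfstle : ∀ q ∈ a.map Prod.fst, q ≤ n := by
    intro q hq
    rw [List.mem_map] at hq
    obtain ⟨p, hp, rfl⟩ := hq
    exact (hent p hp).2.1
  have hnotin : (n + 1 : ℕ) ∉ a.map Prod.fst := fun hc => by
    have := hfstle _ hc
    omega
  have key : ∀ c : ℕ, (c = 0 ∨ c = n + 1) →
      insl a ((n + 1 : ℕ), c) j ∈ PiSn (n + 1) := by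
    intro c hc
    apply mem_PiSn_of
    · rw [insl_length _ _ _ (by omega), hlen]
    · rw [map_insl]
      exact nodup_insl hnotin hnd
    · intro p hp
      rw [mem_insl] at hp
      rcases hp with rfl | hp
      · simp only
        rcases hc with rfl | rfl
        · exact ⟨by omega, by omega, Or.inl rfl⟩
        · exact ⟨by omega, by omega, Or.inr rfl⟩
      · have := hent p hp
        exact ⟨this.1, by omega, this.2.2⟩
  rcases hb with rfl | rfl
  · exact key 0 (Or.inl rfl)
  · exact key (n + 1) (Or.inr rfl)

lemma insertions_nodup {a : CPerm} (ha : a ∈ PiSn n) : (insertions n a).Nodup := by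
  have hlen := PiSn_length ha
  have hent := PiSn_entries ha
  have hinj : ∀ (c : ℕ), ∀ j1 ∈ (Finset.range (n + 1)).val, ∀ j2 ∈ (Finset.range (n + 1)).val,
      insl a ((n + 1 : ℕ), c) j1 = insl a ((n + 1 : ℕ), c) j2 → j1 = j2 := by
    intro c j1 h1 j2 h2 heq
    rw [Finset.mem_val, Finset.mem_range] at h1 h2
    by_contra hne
    wlog hlt : j1 < j2 generalizing j1 j2
    · exact this j2 h2 j1 h1 heq.symm (by omega) (by omega)
    have e1 : (insl a ((n + 1 : ℕ), c) j1).getD j1 (0, 0) = ((n + 1 : ℕ), c) :=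
      insl_getD_self _ _ _ (by omega)
    have e2 : (insl a ((n + 1 : ℕ), c) j2).getD j1 (0, 0) = a.getD j1 (0, 0) :=
      insl_getD_lt _ _ _ hlt (by omega)
    rw [heq, e2] at e1
    have hm : a.getD j1 (0, 0) ∈ a := by
      rw [List.getD_eq_getElem _ _ (by omega)]
      exact List.getElem_mem _
    have := hent _ hm
    rw [e1] at this
    simp only at this
    omega
  rw [insertions, Multiset.nodup_add]
  refine ⟨Multiset.Nodup.map_on (hinj 0) (Finset.range (n + 1)).nodup,
    Multiset.Nodup.map_on (hinj (n + 1)) (Finset.range (n + 1)).nodup, ?_⟩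
  rw [Multiset.disjoint_left]
  intro b hb hb'
  rw [Multiset.mem_map] at hb hb'
  obtain ⟨j1, hj1, rfl⟩ := hb
  obtain ⟨j2, hj2, he⟩ := hb'
  have h1 : ((n + 1 : ℕ), (n + 1 : ℕ)) ∈ insl a ((n + 1 : ℕ), (n + 1 : ℕ)) j2 :=
    mem_insl.2 (Or.inl rfl)
  rw [he] at h1
  rw [mem_insl] at h1
  rcases h1 with h1 | h1
  · simp at h1
  · have := (PiSn_entries ha) _ h1
    simp only at this
    omega

lemma insertions_card {a : CPerm} :
    Multiset.card (insertions n a) = 2 * (n + 1) := by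
  rw [insertions]
  simp [Multiset.card_add]
  ring

lemma insertions_disjoint {a a' : CPerm} (ha : a ∈ PiSn n) (ha' : a' ∈ PiSn n)
    (hne : a ≠ a') : Disjoint (insertions n a) (insertions n a') := by
  rw [Multiset.disjoint_left]
  intro b hb hb'
  apply hne
  have r1 : b.filter (fun q => q.1 ≠ n + 1) = a := by
    obtain ⟨j, hj, hb2⟩ := mem_insertions hb
    have hfst : ∀ p ∈ a, p.1 ≤ n := fun p hp => ((PiSn_entries ha) p hp).2.1
    rcases hb2 with rfl | rfl
    · exact recover_insl hfst _ rfl j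
    · exact recover_insl hfst _ rfl j
  have r2 : b.filter (fun q => q.1 ≠ n + 1) = a' := by
    obtain ⟨j, hj, hb2⟩ := mem_insertions hb'
    have hfst : ∀ p ∈ a', p.1 ≤ n := fun p hp => ((PiSn_entries ha') p hp).2.1
    rcases hb2 with rfl | rfl
    · exact recover_insl hfst _ rfl j
    · exact recover_insl hfst _ rfl j
  rw [← r1, ← r2]

lemma PiSn_card (N : ℕ) : Multiset.card (PiSn N) = N.factorial * 2 ^ N := by
  rw [PiSn, Multiset.card_map]
  have : Multiset.card (Finset.univ : Finset (Equiv.Perm (Fin N) × (Fin N → Bool))).val =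
      Fintype.card (Equiv.Perm (Fin N) × (Fin N → Bool)) := rfl
  rw [this, Fintype.card_prod, Fintype.card_perm, Fintype.card_fun]
  simp

lemma PiSn_succ (n : ℕ) : PiSn (n + 1) = (PiSn n).bind (insertions n) := by
  symm
  apply Multiset.eq_of_le_of_card_le
  · rw [Multiset.le_iff_subset]
    · intro b hb
      rw [Multiset.mem_bind] at hb
      obtain ⟨a, ha, hba⟩ := hb
      exact insertions_mem_PiSn ha hba
    · rw [Multiset.nodup_bind]
      refine ⟨fun a ha => insertions_nodup ha, ?_⟩
      exact Multiset.Nodup.pairwise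
        (fun a ha a' ha' hne => insertions_disjoint ha ha' hne) (PiSn_nodup n)
  · rw [PiSn_card, Multiset.card_bind]
    have he : Multiset.map (Multiset.card ∘ insertions n) (PiSn n) =
        Multiset.map (fun _ => 2 * (n + 1)) (PiSn n) := by
      refine Multiset.map_congr rfl fun a _ => ?_
      exact insertions_card
    rw [he, Multiset.map_const', Multiset.sum_replicate, PiSn_card, smul_eq_mul]
    rw [Nat.factorial_succ]
    apply le_of_eq
    ring
end Recover
end F2D
namespace F2D
set_option linter.unusedSectionVars false
open PowerSeries Finset

lemma hadamard_add_left (A B G : PowerSeries K) :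
    hadamard (A + B) G = hadamard A G + hadamard B G := by
  ext k; simp [coeff_hadamard, add_mul]

lemma hadamard_zero_left (G : PowerSeries K) : hadamard 0 G = 0 := by
  ext k; simp [coeff_hadamard]

lemma hadamard_C_mul (c : K) (F G : PowerSeries K) :
    hadamard (PowerSeries.C (R := K) c * F) G = PowerSeries.C (R := K) c * hadamard F G := by
  ext k
  simp [coeff_hadamard, PowerSeries.coeff_C_mul, mul_assoc]

lemma hadamard_msum {α : Type*} (s : Multiset α) (g : α → PowerSeries K)
    (B : PowerSeries K) :
    hadamard ((s.map g).sum) B = (s.map fun a => hadamard (g a) B).sum := by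
  induction s using Multiset.induction_on with
  | empty => simp [hadamard_zero_left]
  | cons a s ih =>
      rw [Multiset.map_cons, Multiset.map_cons, Multiset.sum_cons, Multiset.sum_cons,
        hadamard_add_left, ih]

lemma foldr_hadamard (l : List (PowerSeries K)) (x : PowerSeries K) :
    l.foldr hadamard x = hadamard (l.foldr hadamard (geom 1)) x := by
  induction l with
  | nil => rw [List.foldr_nil, List.foldr_nil, hadamard_one_left]
  | cons a l ih =>
      rw [List.foldr_cons, List.foldr_cons, ih, hadamard_assoc]

lemma hadamardProdList_append (l : List (PowerSeries K)) (x : PowerSeries K) :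
    hadamardProdList (l ++ [x]) = hadamard (hadamardProdList l) x := by
  rw [hadamardProdList, hadamardProdList, List.foldr_append, List.foldr_cons,
    List.foldr_nil, hadamard_one_right]
  exact foldr_hadamard l x

lemma per_a (d : ℕ → ℕ) (n : ℕ) {a : CPerm} (ha : a ∈ PiSn n) :
    hadamard (Tfun d a * Kn n)
        ((1 - PowerSeries.C (R := K) (XX ^ (1 - (d (n + 1) : ℤ))) * PowerSeries.X) *
          geom (1 : K) * geom XX) =
      ((insertions n a).map (Tfun d)).sum * Kn (n + 1) := by
  have hlen := PiSn_length ha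
  have hent := PiSn_entries ha
  have hs : des a ≤ n := des_le hlen hent
  rw [insertion_sum d hlen hent]
  rw [Tfun, mul_assoc, hadamard_C_mul, hadamard_comm (PowerSeries.X ^ des a * Kn n),
    hadamard_step n (des a) hs (XX ^ (1 - (d (n + 1) : ℤ)))]
  ring

lemma main (d : ℕ → ℕ) (n : ℕ) :
    hadamardProdList ((List.range n).map fun i =>
        (1 - PowerSeries.C (R := K) (XX ^ (1 - (d (i + 1) : ℤ))) * PowerSeries.X) *
          geom (1 : K) * geom XX) =
      ((PiSn n).map (Tfun d)).sum * Kn n := by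
  induction n with
  | zero =>
      simp only [List.range_zero, List.map_nil]
      have h0 : PiSn 0 = {([] : CPerm)} := by
        rw [PiSn]
        have hc : ∀ sg : Equiv.Perm (Fin 0) × (Fin 0 → Bool),
            sg ∈ (Finset.univ : Finset (Equiv.Perm (Fin 0) × (Fin 0 → Bool))).val →
            (List.ofFn fun i : Fin 0 =>
              ((sg.1 i : ℕ) + 1, if sg.2 i then (sg.1 i : ℕ) + 1 else 0)) = ([] : CPerm) :=
          fun sg _ => List.ofFn_zero
        rw [Multiset.map_congr rfl hc, Multiset.map_const']
        have hcard : Multiset.card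
            (Finset.univ : Finset (Equiv.Perm (Fin 0) × (Fin 0 → Bool))).val = 1 := by
          have : Multiset.card
              (Finset.univ : Finset (Equiv.Perm (Fin 0) × (Fin 0 → Bool))).val =
              Fintype.card (Equiv.Perm (Fin 0) × (Fin 0 → Bool)) := rfl
          rw [this, Fintype.card_prod, Fintype.card_perm, Fintype.card_fun]
          simp
        rw [hcard]
        rfl
      rw [h0, Multiset.map_singleton, Multiset.sum_singleton]
      have hT : Tfun d [] = 1 := by
        rw [Tfun]
        have h1 : des ([] : CPerm) = 0 := by simp [des, DesSet]
        have h2 : comaj ([] : CPerm) = 0 := by simp [comaj, DesSet]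
        have h3 : alphaD d ([] : CPerm) = 1 := by simp [alphaD]
        rw [h1, h2, h3]
        norm_num
      rw [hT, one_mul, hadamardProdList, List.foldr_nil, Kn, Finset.prod_range_one, pow_zero]
  | succ n ih =>
      rw [List.range_succ, List.map_append, List.map_cons, List.map_nil,
        hadamardProdList_append, ih, ← Multiset.sum_map_mul_right, hadamard_msum]
      have hper := fun a (ha : a ∈ PiSn n) => per_a d n ha
      rw [Multiset.map_congr rfl hper, Multiset.sum_map_mul_right, PiSn_succ,
        Multiset.map_bind, Multiset.sum_bind]

end F2D


/-- **Corollary.** For `d₁,…,d_n ≥ 1`: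
`⊛ᵢ (1 − X^{1−dᵢ}Y)/((1−Y)(1−XY)) =
 (Σ_{a ∈ Π(S_n)} α(a) X^{comaj(a)} Y^{des(a)}) / ((1−Y)(1−XY)⋯(1−XⁿY))`.
(After `X ← q` and rescaling `Y`, this computes the class-counting zeta function
of `F_{2,d₁} × ⋯ × F_{2,d_n}`.) -/
theorem hadamard_F2d_family (n : ℕ) (hn : 1 ≤ n) (d : ℕ → ℕ)
    (hd : ∀ i ∈ Finset.Icc 1 n, 0 < d i) :
    hadamardProdList ((List.range n).map fun i =>
        (1 - PowerSeries.C (R := K) (XX ^ (1 - (d (i + 1) : ℤ))) * PowerSeries.X) *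
          geom (1 : K) * geom XX) =
      ((PiSn n).map fun a =>
          PowerSeries.C (R := K) (alphaD d a * XX ^ (comaj a : ℤ)) *
            PowerSeries.X ^ des a).sum *
        ∏ i ∈ Finset.range (n + 1), geom (XX ^ (i : ℕ)) := by
  exact F2D.main d n
end
end
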